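/- arXiv:1508.07256 — 5 statements merged into one kernel-verified Lean document; each statement's English description precedes it below -/
import Mathlib

section
/- For every (possibly infinite) graph G and all natural numbers r, s, every graph that is a shallow minor at depth s of some shallow minor of G at depth r is itself a shallow minor of G at depth 2rs + r + s; that is, (G▽r)▽s ⊆ G▽(2rs+r+s). -/
namespace NWD

open SimpleGraph Filter

/-! ### Shallow minors -/

/-- A `d`-shallow minor model of `H` in `G`: a family of pairwise disjoint branch sets,
each connected of radius at most `d` (witnessed by a center joined to every vertex of the
branch set by a walk of length at most `d` inside the branch set), such that every edge of `H`
is realized by an edge of `G` between the corresponding branch sets. -/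
def IsShallowMinorModel {V W : Type} (G : SimpleGraph V) (H : SimpleGraph W) (d : ℕ)
    (α : W → G.Subgraph) : Prop :=
  (∀ w : W, ∃ c : (α w).verts, ∀ x : (α w).verts, ∃ p : (α w).coe.Walk c x, p.length ≤ d) ∧
  (∀ w w' : W, w ≠ w' → Disjoint (α w).verts (α w').verts) ∧
  (∀ w w' : W, H.Adj w w' → ∃ x ∈ (α w).verts, ∃ y ∈ (α w').verts, G.Adj x y)

/-- `H` is a shallow minor of `G` at depth `d`. -/
def IsShallowMinor {V W : Type} (G : SimpleGraph V) (H : SimpleGraph W) (d : ℕ) : Prop :=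
  ∃ α : W → G.Subgraph, IsShallowMinorModel G H d α

/-! ### Topological shallow minors -/

/-- A `d`-shallow topological minor model of `H` in `G`: an injective map `f` on vertices
together with, for every edge `uv` of `H`, a path of length at most `2d+1` in `G` from `f u`
to `f v`; the paths are pairwise vertex-disjoint apart from possibly sharing endpoints. -/
def IsTopMinorModel {V W : Type} (G : SimpleGraph V) (H : SimpleGraph W) (d : ℕ)
    (f : W → V) (P : ∀ ⦃u v : W⦄, H.Adj u v → G.Walk (f u) (f v)) : Prop :=
  Function.Injective f ∧
  (∀ ⦃u v : W⦄ (h : H.Adj u v), (P h).IsPath) ∧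
  (∀ ⦃u v : W⦄ (h : H.Adj u v), (P h).length ≤ 2 * d + 1) ∧
  (∀ ⦃u v : W⦄ (h : H.Adj u v), P h.symm = (P h).reverse) ∧
  (∀ ⦃u v u' v' : W⦄ (h : H.Adj u v) (h' : H.Adj u' v'), s(u, v) ≠ s(u', v') →
    ∀ x : V, x ∈ (P h).support → x ∈ (P h').support →
      (x = f u ∨ x = f v) ∧ (x = f u' ∨ x = f v'))

/-- `H` is a topological shallow minor of `G` at depth `d`. -/
def IsTopShallowMinor {V W : Type} (G : SimpleGraph V) (H : SimpleGraph W) (d : ℕ) : Prop :=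
  ∃ (f : W → V) (P : ∀ ⦃u v : W⦄, H.Adj u v → G.Walk (f u) (f v)),
    IsTopMinorModel G H d f P

/-! ### Ultraproducts of graphs -/

/-- The setoid identifying sequences agreeing on a set of the ultrafilter. -/
def prodSetoid (U : Ultrafilter ℕ) (Vs : ℕ → Type) : Setoid (∀ n, Vs n) where
  r g h := ∀ᶠ n in (U : Filter ℕ), g n = h n
  iseqv := by
    constructor
    · intro g; exact Eventually.of_forall fun n => rfl
    · intro g h hg; exact hg.mono fun n hn => hn.symm
    · intro g h k h1 h2; filter_upwards [h1, h2] with n e1 e2; rw [e1, e2]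

/-- The vertex set of the ultraproduct. -/
def UVertex (U : Ultrafilter ℕ) (Vs : ℕ → Type) : Type := Quotient (prodSetoid U Vs)

/-- The ultraproduct of a sequence of graphs along the ultrafilter `U`. -/
def UGraph (U : Ultrafilter ℕ) {Vs : ℕ → Type} (Gs : ∀ n, SimpleGraph (Vs n)) :
    SimpleGraph (UVertex U Vs) where
  Adj x y := Quotient.liftOn₂ x y
    (fun g h => ∀ᶠ n in (U : Filter ℕ), (Gs n).Adj (g n) (h n))
    (by
      intro a b a' b' ha hb
      apply propext
      constructor
      · intro hadj; filter_upwards [hadj, ha, hb] with n h1 h2 h3; rw [← h2, ← h3]; exact h1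
      · intro hadj; filter_upwards [hadj, ha, hb] with n h1 h2 h3; rw [h2, h3]; exact h1)
  symm := by
    constructor
    intro x y
    refine Quotient.inductionOn₂ x y ?_
    intro g h hadj
    exact hadj.mono fun n hn => hn.symm
  loopless := by
    constructor
    intro x
    refine Quotient.inductionOn x ?_
    intro g hadj
    obtain ⟨n, hn⟩ := hadj.exists
    exact (Gs n).loopless.irrefl _ hn

/-! ### Graph classes and class limits -/

/-- A class of graphs: a predicate on graphs over arbitrary vertex types. -/
def GraphClass : Type 1 := ∀ V : Type, SimpleGraph V → Prop

/-- `C` is a class of finite graphs. -/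
def FiniteClass (C : GraphClass) : Prop :=
  ∀ (V : Type) (G : SimpleGraph V), C V G → Finite V

/-- `H` is (isomorphic to) a subgraph of `G`. -/
def IsSubgraphOf {W V : Type} (H : SimpleGraph W) (G : SimpleGraph V) : Prop :=
  ∃ f : W → V, Function.Injective f ∧ ∀ ⦃u v : W⦄, H.Adj u v → G.Adj (f u) (f v)

/-- Membership in the class limit `C*`: subgraphs of ultraproducts of sequences from `C`. -/
def InLimit (U : Ultrafilter ℕ) (C : GraphClass) {W : Type} (H : SimpleGraph W) : Prop :=
  ∃ (Vs : ℕ → Type) (Gs : ∀ n, SimpleGraph (Vs n)),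
    (∀ n, C (Vs n) (Gs n)) ∧ IsSubgraphOf H (UGraph U Gs)

/-- `H ∈ C ▽ d`. -/
def InClassMinor (C : GraphClass) (d : ℕ) {W : Type} (H : SimpleGraph W) : Prop :=
  ∃ (V : Type) (G : SimpleGraph V), C V G ∧ IsShallowMinor G H d

/-- `H ∈ C ∇̃ d`. -/
def InClassTopMinor (C : GraphClass) (d : ℕ) {W : Type} (H : SimpleGraph W) : Prop :=
  ∃ (V : Type) (G : SimpleGraph V), C V G ∧ IsTopShallowMinor G H d

/-- `H ∈ C* ▽ d`. -/
def InLimitMinor (U : Ultrafilter ℕ) (C : GraphClass) (d : ℕ) {W : Type}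
    (H : SimpleGraph W) : Prop :=
  ∃ (V : Type) (G : SimpleGraph V), InLimit U C G ∧ IsShallowMinor G H d

/-- `H ∈ C* ∇̃ d`. -/
def InLimitTopMinor (U : Ultrafilter ℕ) (C : GraphClass) (d : ℕ) {W : Type}
    (H : SimpleGraph W) : Prop :=
  ∃ (V : Type) (G : SimpleGraph V), InLimit U C G ∧ IsTopShallowMinor G H d

/-- `C` is somewhere dense: all finite graphs are shallow minors at some fixed depth. -/
def SomewhereDense (C : GraphClass) : Prop :=
  ∃ d : ℕ, ∀ (W : Type) (H : SimpleGraph W), Finite W → InClassMinor C d H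

/-- `C` is topologically somewhere dense. -/
def TopSomewhereDense (C : GraphClass) : Prop :=
  ∃ d : ℕ, ∀ (W : Type) (H : SimpleGraph W), Finite W → InClassTopMinor C d H

/-- The countably infinite clique `K_ω`. -/
def Komega : SimpleGraph ℕ := ⊤

/-- The clique on continuum many vertices `K_𝔠`. -/
def Kcontinuum : SimpleGraph (Set ℕ) := ⊤

/-- `C` is hereditary: closed under induced subgraphs. -/
def Hereditary (C : GraphClass) : Prop :=
  ∀ (V : Type) (G : SimpleGraph V), C V G →
    ∀ (W : Type) (f : W → V), Function.Injective f → C W (G.comap f)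

/-! ### Scattered sets and quasi-wideness -/

/-- `X` is a `d`-scattered set of `G - S`: it avoids `S`, and any two distinct vertices of `X`
are at distance greater than `2d` in `G - S` (every connecting walk avoiding `S` is longer
than `2d`). -/
def ScatteredIn {V : Type} (G : SimpleGraph V) (d : ℕ) (S X : Set V) : Prop :=
  Disjoint X S ∧ ∀ u ∈ X, ∀ v ∈ X, u ≠ v →
    ∀ p : G.Walk u v, (∀ x ∈ p.support, x ∉ S) → 2 * d < p.length

/-- `C` is quasi-wide with margin `s`. -/
def QuasiWide (C : GraphClass) (s : ℕ → ℕ) : Prop :=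
  ∀ d m : ℕ, ∃ N : ℕ, ∀ (V : Type) (G : SimpleGraph V), C V G → N ≤ Nat.card V →
    ∃ S X : Set V, S.Finite ∧ S.ncard ≤ s d ∧ X.Finite ∧ X.ncard = m ∧ ScatteredIn G d S X

/-- `C` is uniformly quasi-wide with margin `s`. -/
def UniformlyQuasiWide (C : GraphClass) (s : ℕ → ℕ) : Prop :=
  ∀ d m : ℕ, ∃ N : ℕ, ∀ (V : Type) (G : SimpleGraph V), C V G →
    ∀ W : Set V, N ≤ W.ncard →
      ∃ S X : Set V, S.Finite ∧ S.ncard ≤ s d ∧ X ⊆ W ∧ X.Finite ∧ X.ncard = m ∧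
        ScatteredIn G d S X

/-- `C` is limit quasi-wide. -/
def LimitQW (U : Ultrafilter ℕ) (C : GraphClass) : Prop :=
  ∀ (d : ℕ) (V : Type) (G : SimpleGraph V), InLimit U C G → Infinite V →
    ∃ S X : Set V, S.Finite ∧ X.Infinite ∧ ScatteredIn G d S X

/-- `C` is uniformly limit quasi-wide. -/
def UniformLimitQW (U : Ultrafilter ℕ) (C : GraphClass) : Prop :=
  ∀ (d : ℕ) (V : Type) (G : SimpleGraph V), InLimit U C G →
    ∀ W : Set V, W.Infinite →
      ∃ S X : Set V, S.Finite ∧ X ⊆ W ∧ X.Infinite ∧ ScatteredIn G d S X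

/-- `C` is strongly limit quasi-wide with margin `s`. -/
def StrongLimitQW (U : Ultrafilter ℕ) (C : GraphClass) (s : ℕ → ℕ) : Prop :=
  ∀ (d : ℕ) (V : Type) (G : SimpleGraph V), InLimit U C G → Infinite V →
    ∃ S X : Set V, S.Finite ∧ S.ncard ≤ s d ∧ X.Infinite ∧ ScatteredIn G d S X

/-- `C` is strongly uniformly limit quasi-wide with margin `s`. -/
def StrongUniformLimitQW (U : Ultrafilter ℕ) (C : GraphClass) (s : ℕ → ℕ) : Prop :=
  ∀ (d : ℕ) (V : Type) (G : SimpleGraph V), InLimit U C G →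
    ∀ W : Set V, W.Infinite →
      ∃ S X : Set V, S.Finite ∧ S.ncard ≤ s d ∧ X ⊆ W ∧ X.Infinite ∧ ScatteredIn G d S X

/-! ### The splitter game -/

/-- One round of the splitter game: from arena `A`, connector picks `v`, splitter picks `W`;
the new arena consists of the vertices of `A` outside `W` at distance at most `d` from `v`
in the subgraph induced by `A`. -/
def arenaStep {V : Type} (G : SimpleGraph V) (d : ℕ) (A : Set V) (v : V) (W : Set V) : Set V :=
  {x | x ∈ A ∧ x ∉ W ∧ ∃ p : G.Walk v x, p.length ≤ d ∧ ∀ y ∈ p.support, y ∈ A}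

/-- The arena after a (chronological) history of moves. -/
def arenaAfter {V : Type} (G : SimpleGraph V) (d : ℕ) (hist : List (V × Set V)) : Set V :=
  hist.foldl (fun A mv => arenaStep G d A mv.1 mv.2) Set.univ

/-- A strategy for splitter: given the history and connector's new move, produce a set. -/
def SplitterStrategy (V : Type) : Type := List (V × Set V) → V → Set V

/-- The history of the play where connector plays `c` and splitter follows `σ`. -/
def splitterHist {V : Type} (σ : SplitterStrategy V) (c : ℕ → V) : ℕ → List (V × Set V)
  | 0 => []
  | n + 1 => splitterHist σ c n ++ [(c n, σ (splitterHist σ c n) (c n))]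

/-- Connector's first `n` moves are valid (inside the successive arenas). -/
def ConsistentPlay {V : Type} (G : SimpleGraph V) (d : ℕ) (σ : SplitterStrategy V)
    (c : ℕ → V) (n : ℕ) : Prop :=
  ∀ k < n, c k ∈ arenaAfter G d (splitterHist σ c k)

/-- `σ` is a winning strategy for splitter in the limit `d`-splitter game on `G`:
its moves are valid (finite subsets of the arena) along any consistent play, and no
infinite sequence of valid connector moves exists. -/
def SplitterWinsLimit {V : Type} (G : SimpleGraph V) (d : ℕ) (σ : SplitterStrategy V) : Prop :=
  (∀ (c : ℕ → V) (n : ℕ), ConsistentPlay G d σ c (n + 1) →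
      (σ (splitterHist σ c n) (c n)).Finite ∧
      σ (splitterHist σ c n) (c n) ⊆ arenaAfter G d (splitterHist σ c n)) ∧
  (∀ c : ℕ → V, ∃ n : ℕ, c n ∉ arenaAfter G d (splitterHist σ c n))

/-- `σ` is a winning strategy for splitter in the `(ℓ, m, d)`-splitter game on `G`. -/
def SplitterWinsGame {V : Type} (G : SimpleGraph V) (l m d : ℕ) (σ : SplitterStrategy V) :
    Prop :=
  (∀ (c : ℕ → V) (n : ℕ), ConsistentPlay G d σ c (n + 1) →
      (σ (splitterHist σ c n) (c n)).Finite ∧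
      (σ (splitterHist σ c n) (c n)).ncard ≤ m ∧
      σ (splitterHist σ c n) (c n) ⊆ arenaAfter G d (splitterHist σ c n)) ∧
  (∀ c : ℕ → V, ∃ n ≤ l, c n ∉ arenaAfter G d (splitterHist σ c n))

/-- A strategy for connector: given the history, produce a vertex. -/
def ConnectorStrategy (V : Type) : Type := List (V × Set V) → V

/-- The history of the play where connector follows `τ` and splitter plays `w`. -/
def connectorHist {V : Type} (τ : ConnectorStrategy V) (w : ℕ → Set V) :
    ℕ → List (V × Set V)
  | 0 => []
  | n + 1 => connectorHist τ w n ++ [(τ (connectorHist τ w n), w n)]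

/-- `τ` is a winning strategy for connector in the limit `d`-splitter game on `G`:
as long as splitter's moves are valid, connector's moves stay in the arena forever. -/
def ConnectorWinsLimit {V : Type} (G : SimpleGraph V) (d : ℕ) (τ : ConnectorStrategy V) :
    Prop :=
  ∀ (w : ℕ → Set V) (n : ℕ),
    (∀ k < n, (w k).Finite ∧ w k ⊆ arenaAfter G d (connectorHist τ w k)) →
    τ (connectorHist τ w n) ∈ arenaAfter G d (connectorHist τ w n)

/-- `τ` is a winning strategy for connector in the `(ℓ, m, d)`-splitter game on `G`:
the arena stays nonempty for `ℓ` rounds, i.e. connector has valid moves at rounds `0,…,ℓ`. -/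
def ConnectorWinsGame {V : Type} (G : SimpleGraph V) (l m d : ℕ) (τ : ConnectorStrategy V) :
    Prop :=
  ∀ (w : ℕ → Set V) (n : ℕ), n ≤ l →
    (∀ k < n, (w k).Finite ∧ (w k).ncard ≤ m ∧
      w k ⊆ arenaAfter G d (connectorHist τ w k)) →
    τ (connectorHist τ w n) ∈ arenaAfter G d (connectorHist τ w n)

/-- `C` is winning for splitter. -/
def WinningForSplitter (C : GraphClass) : Prop :=
  ∀ d : ℕ, ∃ l m : ℕ, ∀ (V : Type) (G : SimpleGraph V), C V G →
    ∃ σ : SplitterStrategy V, SplitterWinsGame G l m d σ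

/-- `C` is limit winning for splitter. -/
def LimitWinningForSplitter (U : Ultrafilter ℕ) (C : GraphClass) : Prop :=
  ∀ (d : ℕ) (V : Type) (G : SimpleGraph V), InLimit U C G →
    ∃ σ : SplitterStrategy V, SplitterWinsLimit G d σ

/-! ### First-order satisfaction in graphs -/

/-- `G` satisfies the first-order sentence `φ` in the language of graphs. -/
def GSat {V : Type} (G : SimpleGraph V) (φ : FirstOrder.Language.graph.Sentence) : Prop :=
  @FirstOrder.Language.Sentence.Realize FirstOrder.Language.graph V G.structure φ



lemma map_into {V : Type} {G : SimpleGraph V} (A Γ : G.Subgraph)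
    (hsub : A.verts ⊆ Γ.verts)
    (hΓ : ∀ a b : V, a ∈ Γ.verts → b ∈ Γ.verts → G.Adj a b → Γ.Adj a b)
    {a b : A.verts} (p : A.coe.Walk a b) :
    ∃ p' : Γ.coe.Walk ⟨a.1, hsub a.2⟩ ⟨b.1, hsub b.2⟩, p'.length = p.length := by
  let f : A.coe →g Γ.coe :=
    { toFun := fun y => ⟨y.1, hsub y.2⟩,
      map_rel' := by
        intro y z h
        exact hΓ _ _ (hsub y.2) (hsub z.2) (A.adj_sub h) }
  exact ⟨p.map f, SimpleGraph.Walk.length_map _ _⟩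

lemma aux_walk {V W : Type} {G : SimpleGraph V} {H : SimpleGraph W} {r : ℕ}
    {α : W → G.Subgraph}
    (cα : ∀ w : W, (α w).verts)
    (hc : ∀ (w : W) (y : (α w).verts), ∃ p : (α w).coe.Walk (cα w) y, p.length ≤ r)
    (hadjα : ∀ w w' : W, H.Adj w w' → ∃ a ∈ (α w).verts, ∃ b ∈ (α w').verts, G.Adj a b)
    (B : H.Subgraph) (Γ : G.Subgraph)
    (hv : ∀ w ∈ B.verts, (α w).verts ⊆ Γ.verts)
    (hΓ : ∀ a b : V, a ∈ Γ.verts → b ∈ Γ.verts → G.Adj a b → Γ.Adj a b)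
    (u v : B.verts) (q : B.coe.Walk u v) :
    ∃ p : Γ.coe.Walk ⟨(cα u.1).1, hv u.1 u.2 (cα u.1).2⟩ ⟨(cα v.1).1, hv v.1 v.2 (cα v.1).2⟩,
      p.length ≤ (2 * r + 1) * q.length := by
  induction q with
  | nil => exact ⟨SimpleGraph.Walk.nil, by simp⟩
  | @cons u m v h q ih =>
    obtain ⟨a, ha, b, hb, hab⟩ := hadjα u.1 m.1 (B.adj_sub h)
    obtain ⟨p1, hp1⟩ := hc u.1 ⟨a, ha⟩
    obtain ⟨p2, hp2⟩ := hc m.1 ⟨b, hb⟩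
    obtain ⟨p1', hp1'⟩ := map_into (α u.1) Γ (hv u.1 u.2) hΓ p1
    obtain ⟨p2', hp2'⟩ := map_into (α m.1) Γ (hv m.1 m.2) hΓ p2
    obtain ⟨prest, hrest⟩ := ih
    have e : Γ.coe.Adj ⟨a, hv u.1 u.2 ha⟩ ⟨b, hv m.1 m.2 hb⟩ :=
      hΓ a b (hv u.1 u.2 ha) (hv m.1 m.2 hb) hab
    refine ⟨p1'.append (SimpleGraph.Walk.cons e (p2'.reverse.append prest)), ?_⟩
    simp only [SimpleGraph.Walk.length_append, SimpleGraph.Walk.length_cons,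
      SimpleGraph.Walk.length_reverse]
    have : (2 * r + 1) * (q.length + 1) = (2 * r + 1) * q.length + (2 * r + 1) :=
      Nat.mul_succ _ _
    omega

/-- `(G ▽ r) ▽ s ⊆ G ▽ (2rs + r + s)`: if `H` is a shallow minor of `G`
at depth `r` and `F` is a shallow minor of `H` at depth `s`, then `F` is a shallow minor of
`G` at depth `2rs + r + s`. -/
theorem shallowMinor_trans {V W X : Type} (G : SimpleGraph V) (H : SimpleGraph W)
    (F : SimpleGraph X) (r s : ℕ)
    (hGH : IsShallowMinor G H r) (hHF : IsShallowMinor H F s) :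
    IsShallowMinor G F (2 * r * s + r + s) := by
  obtain ⟨α, hα1, hα2, hα3⟩ := hGH
  obtain ⟨β, hβ1, hβ2, hβ3⟩ := hHF
  choose cα hcα using hα1
  choose cβ hcβ using hβ1
  set S : X → Set V := fun x => {v | ∃ w, w ∈ (β x).verts ∧ v ∈ (α w).verts} with hS
  refine ⟨fun x =>
    { verts := S x
      Adj := fun a b => a ∈ S x ∧ b ∈ S x ∧ G.Adj a b
      adj_sub := fun h => h.2.2
      edge_vert := fun h => h.1
      symm := ⟨fun a b h => ⟨h.2.1, h.1, h.2.2.symm⟩⟩ }, ?_, ?_, ?_⟩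
  · -- radius condition
    intro x
    set Γ : G.Subgraph :=
      { verts := S x
        Adj := fun a b => a ∈ S x ∧ b ∈ S x ∧ G.Adj a b
        adj_sub := fun h => h.2.2
        edge_vert := fun h => h.1
        symm := ⟨fun a b h => ⟨h.2.1, h.1, h.2.2.symm⟩⟩ } with hΓdef
    have hv : ∀ w ∈ (β x).verts, (α w).verts ⊆ Γ.verts := by
      intro w hw v hvw
      exact ⟨w, hw, hvw⟩
    have hΓ : ∀ a b : V, a ∈ Γ.verts → b ∈ Γ.verts → G.Adj a b → Γ.Adj a b :=
      fun a b ha hb hab => ⟨ha, hb, hab⟩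
    refine ⟨⟨(cα (cβ x).1).1, hv (cβ x).1 (cβ x).2 (cα (cβ x).1).2⟩, ?_⟩
    rintro ⟨y, w, hw, hyw⟩
    obtain ⟨q, hq⟩ := hcβ x ⟨w, hw⟩
    obtain ⟨p, hp⟩ := aux_walk cα hcα hα3 (β x) Γ hv hΓ (cβ x) ⟨w, hw⟩ q
    obtain ⟨p2, hp2⟩ := hcα w ⟨y, hyw⟩
    obtain ⟨p2', hp2'⟩ := map_into (α w) Γ (hv w hw) hΓ p2
    refine ⟨p.append p2', ?_⟩
    rw [SimpleGraph.Walk.length_append]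
    have h1 : (2 * r + 1) * q.length ≤ (2 * r + 1) * s :=
      Nat.mul_le_mul_left _ hq
    have : (2 * r + 1) * s = 2 * r * s + s := by ring
    omega
  · -- disjointness
    intro x x' hne
    rw [Set.disjoint_left]
    rintro v ⟨w, hw, hvw⟩ ⟨w', hw', hvw'⟩
    have hww' : w ≠ w' := by
      rintro rfl
      exact (Set.disjoint_left.mp (hβ2 x x' hne) hw) hw'
    exact (Set.disjoint_left.mp (hα2 w w' hww') hvw) hvw'
  · -- edges
    intro x x' hxx'
    obtain ⟨w, hw, w', hw', hH⟩ := hβ3 x x' hxx'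
    obtain ⟨a, ha, b, hb, hG⟩ := hα3 w w' hH
    exact ⟨a, ⟨w, hw, ha⟩, b, ⟨w', hw', hb⟩, hG⟩

end NWD
end

section
/- Fix a class C of finite graphs and d ∈ ℕ. Then (a) (C▽d)* ⊆ C*▽d, and (b) (C∇̃d)* ⊆ C*∇̃d. That is, every subgraph of an ultraproduct of a sequence of graphs that are (topological) shallow minors at depth d of graphs from C is itself a (topological) shallow minor at depth d of a graph in the class limit C*. -/
namespace NWD

open SimpleGraph Filter

/-! ### Auxiliary machinery for the proof of Statement 3 -/

section UltraAux

open SimpleGraph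

/-- Build a walk from a sequence of consecutively adjacent vertices. -/
private def walkOfFun {V : Type} (G : SimpleGraph V) (q : ℕ → V) :
    (ℓ : ℕ) → (∀ i < ℓ, G.Adj (q i) (q (i + 1))) → G.Walk (q 0) (q ℓ)
  | 0, _ => SimpleGraph.Walk.nil
  | (ℓ + 1), h =>
      (walkOfFun G q ℓ fun i hi => h i (hi.trans ℓ.lt_succ_self)).concat (h ℓ ℓ.lt_succ_self)

private lemma walkOfFun_length {V : Type} (G : SimpleGraph V) (q : ℕ → V) :
    ∀ (ℓ : ℕ) (h : ∀ i < ℓ, G.Adj (q i) (q (i + 1))), (walkOfFun G q ℓ h).length = ℓ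
  | 0, _ => rfl
  | (ℓ + 1), h => by
      simp [walkOfFun, SimpleGraph.Walk.length_concat, walkOfFun_length G q ℓ]

private lemma walkOfFun_support {V : Type} (G : SimpleGraph V) (q : ℕ → V) :
    ∀ (ℓ : ℕ) (h : ∀ i < ℓ, G.Adj (q i) (q (i + 1))),
      (walkOfFun G q ℓ h).support = (List.range (ℓ + 1)).map q
  | 0, _ => by simp only [walkOfFun, SimpleGraph.Walk.support_nil]; rfl
  | (ℓ + 1), h => by
      simp [walkOfFun, SimpleGraph.Walk.support_concat, walkOfFun_support G q ℓ,
        List.range_succ]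

private lemma isPath_getVert_inj {V : Type} {G : SimpleGraph V} {u v : V} {p : G.Walk u v}
    (hp : p.IsPath) : ∀ {i j : ℕ}, i ≤ p.length → j ≤ p.length →
      p.getVert i = p.getVert j → i = j := by
  induction p with
  | nil => intro i j hi hj _; simp [SimpleGraph.Walk.length_nil] at hi hj; omega
  | @cons u' v' w' ha q ih =>
    rw [SimpleGraph.Walk.cons_isPath_iff] at hp
    intro i j hi hj h
    match i, j with
    | 0, 0 => rfl
    | 0, (j + 1) =>
      exfalso
      apply hp.2
      rw [SimpleGraph.Walk.mem_support_iff_exists_getVert]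
      refine ⟨j, ?_, ?_⟩
      · have : q.getVert j = u' := by
          simpa [SimpleGraph.Walk.getVert_zero, SimpleGraph.Walk.getVert_cons_succ] using h.symm
        exact this
      · simpa [SimpleGraph.Walk.length_cons] using Nat.succ_le_succ_iff.mp hj
    | (i + 1), 0 =>
      exfalso
      apply hp.2
      rw [SimpleGraph.Walk.mem_support_iff_exists_getVert]
      refine ⟨i, ?_, ?_⟩
      · have : q.getVert i = u' := by
          simpa [SimpleGraph.Walk.getVert_zero, SimpleGraph.Walk.getVert_cons_succ] using h
        exact this
      · simpa [SimpleGraph.Walk.length_cons] using Nat.succ_le_succ_iff.mp hi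
    | (i + 1), (j + 1) =>
      have := ih hp.1 (by simpa [SimpleGraph.Walk.length_cons] using hi)
        (by simpa [SimpleGraph.Walk.length_cons] using hj)
        (by simpa [SimpleGraph.Walk.getVert_cons_succ] using h)
      omega

/-- A bounded `ℕ`-valued function is constant on a set of the ultrafilter. -/
private lemma exists_eventually_const (U : Ultrafilter ℕ) {f : ℕ → ℕ} {d : ℕ}
    (h : ∀ᶠ n in (U : Filter ℕ), f n ≤ d) :
    ∃ ℓ ≤ d, ∀ᶠ n in (U : Filter ℕ), f n = ℓ := by
  by_contra hc
  push_neg at hc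
  have h3 : ∀ᶠ n in (U : Filter ℕ), ∀ ℓ ∈ Finset.range (d + 1), f n ≠ ℓ :=
    (Filter.eventually_all_finset _).mpr fun ℓ hℓ =>
      (hc ℓ (Nat.lt_succ_iff.mp (Finset.mem_range.mp hℓ)))
  obtain ⟨n, hn1, hn2⟩ := (h.and h3).exists
  exact hn2 (f n) (Finset.mem_range.mpr (Nat.lt_succ_of_le hn1)) rfl

variable {U : Ultrafilter ℕ}

private lemma uadj_out {Vs : ℕ → Type} {Gs : ∀ n, SimpleGraph (Vs n)} {x y : UVertex U Vs} :
    (UGraph U Gs).Adj x y ↔ ∀ᶠ n in (U : Filter ℕ), (Gs n).Adj (x.out n) (y.out n) := by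
  conv_lhs => rw [← x.out_eq, ← y.out_eq]
  exact Iff.rfl

private lemma ueq_mk_of_eventually {Vs : ℕ → Type} {x : UVertex U Vs} {g : ∀ n, Vs n}
    (h : ∀ᶠ n in (U : Filter ℕ), x.out n = g n) : x = Quotient.mk _ g := by
  rw [← x.out_eq]; exact Quotient.sound h

private lemma ueq_of_eventually {Vs : ℕ → Type} {x y : UVertex U Vs}
    (h : ∀ᶠ n in (U : Filter ℕ), x.out n = y.out n) : x = y := by
  rw [← x.out_eq, ← y.out_eq]; exact Quotient.sound h

private lemma uout_of_eq_mk {Vs : ℕ → Type} {x : UVertex U Vs} {g : ∀ n, Vs n}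
    (h : x = Quotient.mk _ g) : ∀ᶠ n in (U : Filter ℕ), x.out n = g n :=
  Quotient.exact (x.out_eq.symm ▸ h : Quotient.mk _ x.out = Quotient.mk _ g)

private lemma une_out {Vs : ℕ → Type} {x y : UVertex U Vs} (h : x ≠ y) :
    ∀ᶠ n in (U : Filter ℕ), x.out n ≠ y.out n :=
  Ultrafilter.eventually_not.mpr fun hev => h (ueq_of_eventually hev)

/-- Shallow minors pass to subgraphs of the big graph. -/
private lemma shallow_of_subgraph {W W' V : Type} {H : SimpleGraph W} {H' : SimpleGraph W'}
    {G : SimpleGraph V} {d : ℕ} (hs : IsSubgraphOf H H') (hm : IsShallowMinor G H' d) :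
    IsShallowMinor G H d := by
  obtain ⟨f, hfinj, hfadj⟩ := hs
  obtain ⟨α, h1, h2, h3⟩ := hm
  exact ⟨fun w => α (f w), fun w => h1 (f w),
    fun w w' hne => h2 _ _ fun h => hne (hfinj h), fun w w' h => h3 _ _ (hfadj h)⟩

/-- Topological shallow minors pass to subgraphs of the big graph. -/
private lemma top_of_subgraph {W W' V : Type} {H : SimpleGraph W} {H' : SimpleGraph W'}
    {G : SimpleGraph V} {d : ℕ} (hs : IsSubgraphOf H H') (hm : IsTopShallowMinor G H' d) :
    IsTopShallowMinor G H d := by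
  obtain ⟨e, heinj, headj⟩ := hs
  obtain ⟨f, P, hfinj, hpath, hlen, hsymm, hdisj⟩ := hm
  refine ⟨fun w => f (e w), fun u v h => P (headj h), hfinj.comp heinj,
    fun u v h => hpath _, fun u v h => hlen _, fun u v h => hsymm (headj h), ?_⟩
  intro u v u' v' h h' hne x hx hx'
  refine hdisj (headj h) (headj h') ?_ x hx hx'
  intro hcontra
  apply hne
  rw [Sym2.eq_iff] at hcontra ⊢
  rcases hcontra with ⟨h1, h2⟩ | ⟨h1, h2⟩
  · exact Or.inl ⟨heinj h1, heinj h2⟩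
  · exact Or.inr ⟨heinj h1, heinj h2⟩

/-- The branch set of `w` in the ultraproduct. -/
private def branchSub {U : Ultrafilter ℕ} {Vs Ws : ℕ → Type} (Gs : ∀ n, SimpleGraph (Vs n))
    (α : ∀ n, Ws n → (Gs n).Subgraph) (w : UVertex U Ws) : (UGraph U Gs).Subgraph where
  verts := {x | ∀ᶠ n in (U : Filter ℕ), x.out n ∈ (α n (w.out n)).verts}
  Adj x y := (∀ᶠ n in (U : Filter ℕ), x.out n ∈ (α n (w.out n)).verts) ∧
    (∀ᶠ n in (U : Filter ℕ), y.out n ∈ (α n (w.out n)).verts) ∧ (UGraph U Gs).Adj x y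
  adj_sub h := h.2.2
  edge_vert h := h.1
  symm := ⟨fun _ _ h => ⟨h.2.1, h.1, h.2.2.symm⟩⟩

/-- The ultraproduct of shallow minors is a shallow minor of the ultraproduct. -/
private lemma ultra_shallow {d : ℕ} {Vs Ws : ℕ → Type} {Gs : ∀ n, SimpleGraph (Vs n)}
    {Hs : ∀ n, SimpleGraph (Ws n)} (hm : ∀ n, IsShallowMinor (Gs n) (Hs n) d) :
    IsShallowMinor (UGraph U Gs) (UGraph U Hs) d := by
  classical
  choose α hmod using hm
  choose c hc using fun n => (hmod n).1
  choose pw hpw using fun n w => hc n w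
  refine ⟨branchSub Gs α, ?_, ?_, ?_⟩
  · -- radius condition
    intro w
    have hc0 : (Quotient.mk _ (fun n => (c n (w.out n)).val) : UVertex U Vs) ∈
        (branchSub Gs α w).verts := by
      show ∀ᶠ n in (U : Filter ℕ), _
      filter_upwards [uout_of_eq_mk (rfl :
        (Quotient.mk _ (fun n => (c n (w.out n)).val) : UVertex U Vs) = _)] with n he
      rw [he]; exact (c n (w.out n)).2
    refine ⟨⟨_, hc0⟩, ?_⟩
    rintro ⟨x, hx⟩
    have hA : ∀ᶠ n in (U : Filter ℕ), x.out n ∈ (α n (w.out n)).verts := hx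
    set L : ℕ → ℕ := fun n =>
      if hn : x.out n ∈ (α n (w.out n)).verts
      then (pw n (w.out n) ⟨x.out n, hn⟩).length else 0 with hLdef
    have hLd : ∀ᶠ n in (U : Filter ℕ), L n ≤ d := by
      filter_upwards [hA] with n hn
      simpa [hLdef, dif_pos hn] using hpw n (w.out n) ⟨x.out n, hn⟩
    obtain ⟨ℓ, hℓd, hL⟩ := exists_eventually_const U hLd
    set qf : ℕ → ∀ n, Vs n := fun i n =>
      if hn : x.out n ∈ (α n (w.out n)).verts
      then ((pw n (w.out n) ⟨x.out n, hn⟩).getVert i).val else x.out n with hqfdef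
    set q : ℕ → UVertex U Vs := fun i => Quotient.mk _ (qf i) with hqdef
    have hqmem : ∀ i, q i ∈ (branchSub Gs α w).verts := by
      intro i
      show ∀ᶠ n in (U : Filter ℕ), _
      filter_upwards [hA, uout_of_eq_mk (rfl : q i = Quotient.mk _ (qf i))] with n hn he
      rw [he, hqfdef]
      simp only [dif_pos hn]
      exact ((pw n (w.out n) ⟨x.out n, hn⟩).getVert i).2
    set q' : ℕ → (branchSub Gs α (U := U) w).verts := fun i => ⟨q i, hqmem i⟩ with hq'def
    have hadj : ∀ i < ℓ, (branchSub Gs α w).coe.Adj (q' i) (q' (i + 1)) := by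
      intro i hi
      refine ⟨hqmem i, hqmem (i + 1), ?_⟩
      show (UGraph U Gs).Adj (Quotient.mk _ (qf i)) (Quotient.mk _ (qf (i + 1)))
      show ∀ᶠ n in (U : Filter ℕ), (Gs n).Adj (qf i n) (qf (i + 1) n)
      filter_upwards [hA, hL] with n hn hLn
      have hlen : i < (pw n (w.out n) ⟨x.out n, hn⟩).length := by
        rw [show (pw n (w.out n) ⟨x.out n, hn⟩).length = L n by simp [hLdef, dif_pos hn], hLn]
        exact hi
      have := (pw n (w.out n) ⟨x.out n, hn⟩).adj_getVert_succ hlen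
      simp only [hqfdef, dif_pos hn]
      exact (α n (w.out n)).adj_sub this
    have h0 : q' 0 = ⟨_, hc0⟩ := by
      apply Subtype.ext
      show q 0 = Quotient.mk _ (fun n => (c n (w.out n)).val)
      apply Quotient.sound
      show ∀ᶠ n in (U : Filter ℕ), qf 0 n = (c n (w.out n)).val
      filter_upwards [hA] with n hn
      simp only [hqfdef, dif_pos hn]
      congr 1
      exact (pw n (w.out n) ⟨x.out n, hn⟩).getVert_zero
    have hend : q' ℓ = ⟨x, hx⟩ := by
      apply Subtype.ext
      show q ℓ = x
      rw [hqdef]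
      refine (ueq_mk_of_eventually ?_).symm
      filter_upwards [hA, hL] with n hn hLn
      simp only [hqfdef, dif_pos hn]
      have hℓlen : (pw n (w.out n) ⟨x.out n, hn⟩).length ≤ ℓ := by
        rw [show (pw n (w.out n) ⟨x.out n, hn⟩).length = L n by simp [hLdef, dif_pos hn], hLn]
      rw [(pw n (w.out n) ⟨x.out n, hn⟩).getVert_of_length_le hℓlen]
    refine ⟨(walkOfFun _ q' ℓ hadj).copy h0 hend, ?_⟩
    rw [SimpleGraph.Walk.length_copy, walkOfFun_length]
    exact hℓd
  · -- disjointness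
    intro w w' hne
    rw [Set.disjoint_left]
    intro x hx hx'
    obtain ⟨n, h1, h2, h3⟩ := ((une_out hne).and
      ((hx : ∀ᶠ n in (U : Filter ℕ), x.out n ∈ (α n (w.out n)).verts).and
       (hx' : ∀ᶠ n in (U : Filter ℕ), x.out n ∈ (α n (w'.out n)).verts))).exists
    exact Set.disjoint_left.mp ((hmod n).2.1 _ _ h1) h2 h3
  · -- edges
    intro w w' hadj
    have hA : ∀ᶠ n in (U : Filter ℕ), (Hs n).Adj (w.out n) (w'.out n) := uadj_out.mp hadj
    haveI : ∀ n, Nonempty (Vs n) := fun n => ⟨(c n (w.out n)).val⟩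
    have hsel : ∀ n, ∃ xy : Vs n × Vs n,
        (Hs n).Adj (w.out n) (w'.out n) →
          xy.1 ∈ (α n (w.out n)).verts ∧ xy.2 ∈ (α n (w'.out n)).verts ∧
            (Gs n).Adj xy.1 xy.2 := by
      intro n
      by_cases hn : (Hs n).Adj (w.out n) (w'.out n)
      · obtain ⟨a, ha, b, hb, hab⟩ := (hmod n).2.2 _ _ hn
        exact ⟨(a, b), fun _ => ⟨ha, hb, hab⟩⟩
      · exact ⟨Classical.arbitrary _, fun h => absurd h hn⟩
    choose xy hxy using hsel
    refine ⟨Quotient.mk _ (fun n => (xy n).1), ?_, Quotient.mk _ (fun n => (xy n).2), ?_, ?_⟩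
    · show ∀ᶠ n in (U : Filter ℕ), _
      filter_upwards [hA, uout_of_eq_mk
        (rfl : (Quotient.mk _ (fun n => (xy n).1) : UVertex U Vs) = _)] with n hn he
      rw [he]; exact (hxy n hn).1
    · show ∀ᶠ n in (U : Filter ℕ), _
      filter_upwards [hA, uout_of_eq_mk
        (rfl : (Quotient.mk _ (fun n => (xy n).2) : UVertex U Vs) = _)] with n hn he
      rw [he]; exact (hxy n hn).2.1
    · show ∀ᶠ n in (U : Filter ℕ), (Gs n).Adj ((xy n).1) ((xy n).2)
      filter_upwards [hA] with n hn
      exact (hxy n hn).2.2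

/-- The ultraproduct of topological shallow minors is a topological shallow minor
of the ultraproduct. -/
private lemma ultra_top {d : ℕ} {Vs Ws : ℕ → Type} {Gs : ∀ n, SimpleGraph (Vs n)}
    {Hs : ∀ n, SimpleGraph (Ws n)} (hm : ∀ n, IsTopShallowMinor (Gs n) (Hs n) d) :
    IsTopShallowMinor (UGraph U Gs) (UGraph U Hs) d := by
  classical
  choose f P hmod using hm
  set F : UVertex U Ws → UVertex U Vs :=
    fun x => Quotient.mk _ (fun n => f n (x.out n)) with hFdef
  have hFinj : Function.Injective F := by
    intro x y hxy
    have h1 : ∀ᶠ n in (U : Filter ℕ), f n (x.out n) = f n (y.out n) := Quotient.exact hxy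
    exact ueq_of_eventually (h1.mono fun n hn => (hmod n).1 hn)
  -- for every edge, build a connecting path
  have key : ∀ (x y : UVertex U Ws), (UGraph U Hs).Adj x y →
      ∃ p : (UGraph U Gs).Walk (F x) (F y),
        p.IsPath ∧ p.length ≤ 2 * d + 1 ∧
        ∀ z ∈ p.support, ∀ᶠ n in (U : Filter ℕ),
          ∃ hn : (Hs n).Adj (x.out n) (y.out n), z.out n ∈ (P n hn).support := by
    intro x y hadj
    have hA : ∀ᶠ n in (U : Filter ℕ), (Hs n).Adj (x.out n) (y.out n) := uadj_out.mp hadj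
    set L : ℕ → ℕ := fun n =>
      if hn : (Hs n).Adj (x.out n) (y.out n) then (P n hn).length else 0 with hLdef
    have hLd : ∀ᶠ n in (U : Filter ℕ), L n ≤ 2 * d + 1 := by
      filter_upwards [hA] with n hn
      simpa [hLdef, dif_pos hn] using (hmod n).2.2.1 hn
    obtain ⟨ℓ, hℓd, hL⟩ := exists_eventually_const U hLd
    set qf : ℕ → ∀ n, Vs n := fun i n =>
      if hn : (Hs n).Adj (x.out n) (y.out n) then (P n hn).getVert i
      else f n (x.out n) with hqfdef
    set q : ℕ → UVertex U Vs := fun i => Quotient.mk _ (qf i) with hqdef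
    have hBadj : ∀ i < ℓ, (UGraph U Gs).Adj (q i) (q (i + 1)) := by
      intro i hi
      show ∀ᶠ n in (U : Filter ℕ), (Gs n).Adj (qf i n) (qf (i + 1) n)
      filter_upwards [hA, hL] with n hn hLn
      simp only [hqfdef, dif_pos hn]
      exact (P n hn).adj_getVert_succ (by
        rw [show (P n hn).length = L n by simp [hLdef, dif_pos hn], hLn]; exact hi)
    have h0 : q 0 = F x := by
      apply Quotient.sound
      show ∀ᶠ n in (U : Filter ℕ), qf 0 n = f n (x.out n)
      refine Filter.Eventually.of_forall fun n => ?_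
      by_cases hn : (Hs n).Adj (x.out n) (y.out n)
      · simp only [hqfdef, dif_pos hn]; exact (P n hn).getVert_zero
      · simp only [hqfdef, dif_neg hn]
    have hend : q ℓ = F y := by
      apply Quotient.sound
      show ∀ᶠ n in (U : Filter ℕ), qf ℓ n = f n (y.out n)
      filter_upwards [hA, hL] with n hn hLn
      simp only [hqfdef, dif_pos hn]
      exact (P n hn).getVert_of_length_le
        (by rw [show (P n hn).length = L n by simp [hLdef, dif_pos hn], hLn])
    refine ⟨(walkOfFun _ q ℓ hBadj).copy h0 hend, ?_, ?_, ?_⟩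
    · rw [SimpleGraph.Walk.isPath_def, SimpleGraph.Walk.support_copy,
        walkOfFun_support]
      refine List.Nodup.map_on ?_ List.nodup_range
      intro i hi j hj hij
      rw [List.mem_range, Nat.lt_succ_iff] at hi hj
      have hev : ∀ᶠ n in (U : Filter ℕ), qf i n = qf j n := Quotient.exact hij
      obtain ⟨n, hn1, hn2, hn3⟩ := (hA.and (hL.and hev)).exists
      have hPlen : (P n hn1).length = ℓ := by
        rw [show (P n hn1).length = L n by simp [hLdef, dif_pos hn1], hn2]
      refine isPath_getVert_inj ((hmod n).2.1 hn1) (hPlen ▸ hi) (hPlen ▸ hj) ?_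
      simpa only [hqfdef, dif_pos hn1] using hn3
    · rw [SimpleGraph.Walk.length_copy, walkOfFun_length]; exact hℓd
    · intro z hz
      rw [SimpleGraph.Walk.support_copy, walkOfFun_support, List.mem_map] at hz
      obtain ⟨i, hi, hiz⟩ := hz
      rw [List.mem_range, Nat.lt_succ_iff] at hi
      have hev : ∀ᶠ n in (U : Filter ℕ), z.out n = qf i n :=
        uout_of_eq_mk (hiz.symm : z = Quotient.mk _ (qf i))
      filter_upwards [hA, hL, hev] with n hn hLn hze
      refine ⟨hn, ?_⟩
      rw [SimpleGraph.Walk.mem_support_iff_exists_getVert]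
      refine ⟨i, ?_, ?_⟩
      · rw [hze]; simp only [hqfdef, dif_pos hn]
      · rw [show (P n hn).length = L n by simp [hLdef, dif_pos hn], hLn]; exact hi
  choose build hb1 hb2 hb3 using key
  letI : LinearOrder (UVertex U Ws) := IsWellOrder.linearOrder WellOrderingRel
  refine ⟨F, fun x y h => if hxy : x < y then build x y h
    else (build y x h.symm).reverse, hFinj, ?_, ?_, ?_, ?_⟩
  · intro u v h
    beta_reduce
    by_cases hxy : u < v
    · rw [dif_pos hxy]; exact hb1 u v h
    · rw [dif_neg hxy]; exact (hb1 v u h.symm).reverse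
  · intro u v h
    beta_reduce
    by_cases hxy : u < v
    · rw [dif_pos hxy]; exact hb2 u v h
    · rw [dif_neg hxy, SimpleGraph.Walk.length_reverse]; exact hb2 v u h.symm
  · intro u v h
    beta_reduce
    have hne : u ≠ v := h.ne
    rcases hne.lt_or_gt with hlt | hgt
    · rw [dif_neg (not_lt_of_gt hlt), dif_pos hlt]
    · rw [dif_pos hgt, dif_neg (not_lt_of_gt hgt), SimpleGraph.Walk.reverse_reverse]
  · intro u v u' v' h h' hne z hz hz'
    beta_reduce at hz hz'
    -- support transfer
    have supP : ∀ ⦃a b : UVertex U Ws⦄ (hab : (UGraph U Hs).Adj a b) (z : UVertex U Vs),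
        z ∈ (if hxy : a < b then build a b hab
          else (build b a hab.symm).reverse).support →
        ∀ᶠ n in (U : Filter ℕ),
          ∃ hn : (Hs n).Adj (a.out n) (b.out n), z.out n ∈ (P n hn).support := by
      intro a b hab z hzmem
      by_cases hxy : a < b
      · rw [dif_pos hxy] at hzmem
        exact hb3 a b hab z hzmem
      · rw [dif_neg hxy, SimpleGraph.Walk.support_reverse, List.mem_reverse] at hzmem
        filter_upwards [hb3 b a hab.symm z hzmem] with n hn
        obtain ⟨hadj, hmem⟩ := hn
        refine ⟨hadj.symm, ?_⟩
        have hrev : P n hadj.symm = (P n hadj).reverse := (hmod n).2.2.2.1 hadj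
        rw [hrev, SimpleGraph.Walk.support_reverse, List.mem_reverse]
        exact hmem
    have hev1 := supP h z hz
    have hev2 := supP h' z hz'
    have hs2 : ∀ᶠ n in (U : Filter ℕ),
        s(u.out n, v.out n) ≠ s(u'.out n, v'.out n) := by
      refine Ultrafilter.eventually_not.mpr fun hevE => hne ?_
      have : ∀ᶠ n in (U : Filter ℕ),
          (u.out n = u'.out n ∧ v.out n = v'.out n) ∨
          (u.out n = v'.out n ∧ v.out n = u'.out n) := by
        filter_upwards [hevE] with n hn
        exact Sym2.eq_iff.mp hn
      rcases Ultrafilter.eventually_or.mp this with hcase | hcase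
      · rw [Sym2.eq_iff]
        exact Or.inl ⟨ueq_of_eventually (hcase.mono fun n hn => hn.1),
          ueq_of_eventually (hcase.mono fun n hn => hn.2)⟩
      · rw [Sym2.eq_iff]
        exact Or.inr ⟨ueq_of_eventually (hcase.mono fun n hn => hn.1),
          ueq_of_eventually (hcase.mono fun n hn => hn.2)⟩
    have hbig : ∀ᶠ n in (U : Filter ℕ),
        (z.out n = f n (u.out n) ∨ z.out n = f n (v.out n)) ∧
        (z.out n = f n (u'.out n) ∨ z.out n = f n (v'.out n)) := by
      filter_upwards [hev1, hev2, hs2] with n h1 h2 h3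
      obtain ⟨hn1, hm1⟩ := h1
      obtain ⟨hn2, hm2⟩ := h2
      exact (hmod n).2.2.2.2 hn1 hn2 h3 (z.out n) hm1 hm2
    constructor
    · rcases Ultrafilter.eventually_or.mp (hbig.mono fun n hn => hn.1) with hc | hc
      · exact Or.inl (ueq_mk_of_eventually hc)
      · exact Or.inr (ueq_mk_of_eventually hc)
    · rcases Ultrafilter.eventually_or.mp (hbig.mono fun n hn => hn.2) with hc | hc
      · exact Or.inl (ueq_mk_of_eventually hc)
      · exact Or.inr (ueq_mk_of_eventually hc)

end UltraAux

/-- `(C ▽ d)* ⊆ C* ▽ d` and `(C ∇̃ d)* ⊆ C* ∇̃ d`. -/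
theorem ultra_inclusion (U : Ultrafilter ℕ) (hU : ∀ a : ℕ, {a} ∉ U)
    (C : GraphClass) (hfin : FiniteClass C) (d : ℕ) :
    (∀ (W : Type) (H : SimpleGraph W),
        InLimit U (fun _ G => InClassMinor C d G) H → InLimitMinor U C d H) ∧
    (∀ (W : Type) (H : SimpleGraph W),
        InLimit U (fun _ G => InClassTopMinor C d G) H → InLimitTopMinor U C d H) := by
  constructor
  · rintro W H ⟨Ws, Hs, hHs, hsub⟩
    choose Vs Gs hC hmin using hHs
    exact ⟨UVertex U Vs, UGraph U Gs,
      ⟨Vs, Gs, hC, ⟨id, Function.injective_id, fun _ _ h => h⟩⟩,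
      shallow_of_subgraph hsub (ultra_shallow hmin)⟩
  · rintro W H ⟨Ws, Hs, hHs, hsub⟩
    choose Vs Gs hC hmin using hHs
    exact ⟨UVertex U Vs, UGraph U Gs,
      ⟨Vs, Gs, hC, ⟨id, Function.injective_id, fun _ _ h => h⟩⟩,
      top_of_subgraph hsub (ultra_top hmin)⟩


end NWD
end

section
/- Let C be a class of finite graphs. The following are equivalent: (1) C is somewhere dense; (2) every finite graph belongs to C▽d for some d ∈ ℕ; (3) every finite graph belongs to C*▽d for some d ∈ ℕ; (4) the countably infinite clique K_ω belongs to C*▽ω; (5) the clique K_𝔠 on continuum many vertices belongs to C*▽ω. -/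
namespace NWD

open SimpleGraph Filter

/-! ### Helper lemmas -/

section Helpers

/-- Build a walk of given length in the subgraph induced on `s` from a chain of adjacent
vertices lying in `s`. -/
lemma chain_walk_induce {V : Type} (G : SimpleGraph V) (s : Set V) (f : ℕ → V) (ℓ : ℕ)
    (hmem : ∀ i ≤ ℓ, f i ∈ s) (hadj : ∀ i < ℓ, G.Adj (f i) (f (i + 1))) :
    ∃ q : ((⊤ : G.Subgraph).induce s).coe.Walk ⟨f 0, hmem 0 (Nat.zero_le _)⟩
      ⟨f ℓ, hmem ℓ le_rfl⟩, q.length = ℓ := by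
  induction ℓ with
  | zero => exact ⟨Walk.nil, rfl⟩
  | succ n ih =>
    obtain ⟨q, hq⟩ := ih (fun i hi => hmem i (hi.trans (Nat.le_succ n)))
      (fun i hi => hadj i (hi.trans (Nat.lt_succ_self n)))
    refine ⟨q.concat ?_, ?_⟩
    · show ((⊤ : G.Subgraph).induce s).Adj (f n) (f (n + 1))
      exact ⟨hmem n (Nat.le_succ n), hmem (n+1) le_rfl, hadj n (Nat.lt_succ_self n)⟩
    · rw [Walk.length_concat, hq]

variable {U : Ultrafilter ℕ} {Vs : ℕ → Type}

/-- The class of a sequence. -/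
def mkU (U : Ultrafilter ℕ) (Vs : ℕ → Type) (g : ∀ n, Vs n) : UVertex U Vs :=
  Quotient.mk (prodSetoid U Vs) g

lemma mkU_out (x : UVertex U Vs) : mkU U Vs (Quotient.out x) = x := Quotient.out_eq x

lemma out_agree (g : ∀ n, Vs n) : ∀ᶠ n in (U : Filter ℕ), (mkU U Vs g).out n = g n :=
  Quotient.exact (Quotient.out_eq (mkU U Vs g))

lemma mkU_eq_iff {g h : ∀ n, Vs n} :
    mkU U Vs g = mkU U Vs h ↔ ∀ᶠ n in (U : Filter ℕ), g n = h n := by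
  constructor
  · exact fun e => Quotient.exact e
  · exact fun e => Quotient.sound e

lemma ugraph_adj_mk {Gs : ∀ n, SimpleGraph (Vs n)} {g h : ∀ n, Vs n} :
    (UGraph U Gs).Adj (mkU U Vs g) (mkU U Vs h) ↔
      ∀ᶠ n in (U : Filter ℕ), (Gs n).Adj (g n) (h n) := Iff.rfl

lemma ugraph_adj_out {Gs : ∀ n, SimpleGraph (Vs n)} {x y : UVertex U Vs} :
    (UGraph U Gs).Adj x y ↔ ∀ᶠ n in (U : Filter ℕ), (Gs n).Adj (x.out n) (y.out n) := by
  conv_lhs => rw [← mkU_out x, ← mkU_out y]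
  exact Iff.rfl

lemma ne_eventually_ne {x y : UVertex U Vs} (h : x ≠ y) :
    ∀ᶠ n in (U : Filter ℕ), x.out n ≠ y.out n := by
  have : ¬ (∀ᶠ n in (U : Filter ℕ), x.out n = y.out n) := by
    intro he
    exact h (by rw [← mkU_out x, ← mkU_out y]; exact mkU_eq_iff.2 he)
  rwa [← Ultrafilter.eventually_not] at this

end Helpers

section Helpers2
variable {U : Ultrafilter ℕ}

lemma cofinite_mem (hU : ∀ a : ℕ, {a} ∉ U) {s : Set ℕ} (hs : sᶜ.Finite) :
    s ∈ U := by
  have hle : (U : Filter ℕ) ≤ cofinite := by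
    rw [Filter.le_cofinite_iff_compl_singleton_mem]
    intro a
    exact Ultrafilter.compl_mem_iff_notMem.2 (hU a)
  exact hle (by rwa [Filter.mem_cofinite])

open scoped Classical in
/-- Binary encoding of `A ∩ [0, m)`. -/
noncomputable def enc (A : Set ℕ) (m : ℕ) : ℕ :=
  ∑ k ∈ Finset.range m, if k ∈ A then 2 ^ k else 0

open scoped Classical in
lemma enc_succ (A : Set ℕ) (m : ℕ) :
    enc A (m + 1) = enc A m + (if m ∈ A then 2 ^ m else 0) := by
  simp [enc, Finset.sum_range_succ]

lemma enc_lt (A : Set ℕ) (m : ℕ) : enc A m < 2 ^ m := by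
  induction m with
  | zero => simp [enc]
  | succ n ih =>
    rw [enc_succ, pow_succ]
    split <;> omega

lemma enc_inj {A B : Set ℕ} : ∀ m : ℕ, enc A m = enc B m → ∀ k < m, (k ∈ A ↔ k ∈ B) := by
  intro m
  induction m with
  | zero => intro _ k hk; omega
  | succ n ih =>
    intro h k hk
    have hA := enc_lt A n
    have hB := enc_lt B n
    rw [enc_succ, enc_succ] at h
    have hsame : enc A n = enc B n ∧ ((n ∈ A) ↔ (n ∈ B)) := by
      split_ifs at h with h1 h2 h2
      · exact ⟨by omega, by simp [h1, h2]⟩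
      · exfalso; omega
      · exfalso; omega
      · exact ⟨by omega, by simp [h1, h2]⟩
    rcases Nat.lt_succ_iff_lt_or_eq.1 hk with hk' | rfl
    · exact ih hsame.1 k hk'
    · exact hsame.2

/-- A shallow minor of a graph that embeds as a subgraph into another. -/
lemma shallowMinor_mono {V V' W : Type} {G : SimpleGraph V} {G' : SimpleGraph V'}
    {H : SimpleGraph W} {d : ℕ} (hsub : IsSubgraphOf G G') (h : IsShallowMinor G H d) :
    IsShallowMinor G' H d := by
  obtain ⟨f, hinj, hadj⟩ := hsub
  obtain ⟨α, hcen, hdis, hedge⟩ := h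
  refine ⟨fun w => (⊤ : G'.Subgraph).induce (f '' (α w).verts), ?_, ?_, ?_⟩
  · intro w
    obtain ⟨c, hc⟩ := hcen w
    refine ⟨⟨f c, ⟨c, c.2, rfl⟩⟩, ?_⟩
    rintro ⟨x, a, ha, rfl⟩
    obtain ⟨p, hp⟩ := hc ⟨a, ha⟩
    obtain ⟨q, hq⟩ := chain_walk_induce G' (f '' (α w).verts)
      (fun i => f ((p.getVert i : V))) p.length
      (fun i _ => ⟨(p.getVert i : V), (p.getVert i).2, rfl⟩)
      (fun i hi => hadj ((α w).adj_sub (p.adj_getVert_succ hi)))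
    have e0 : (⟨f ((p.getVert 0 : (α w).verts) : V), ⟨_, (p.getVert 0).2, rfl⟩⟩ :
        ((⊤ : G'.Subgraph).induce (f '' (α w).verts)).verts) = ⟨f ↑c, ⟨c, c.2, rfl⟩⟩ :=
      Subtype.ext (by rw [p.getVert_zero])
    have e1 : (⟨f ((p.getVert p.length : (α w).verts) : V), ⟨_, (p.getVert p.length).2, rfl⟩⟩ :
        ((⊤ : G'.Subgraph).induce (f '' (α w).verts)).verts) = ⟨f a, ⟨a, ha, rfl⟩⟩ :=
      Subtype.ext (by rw [p.getVert_length])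
    exact ⟨(q.copy e0 e1), by rw [Walk.length_copy, hq]; exact hp⟩
  · intro w w' hww
    exact (Set.disjoint_image_iff hinj).2 (hdis w w' hww)
  · intro w w' hww
    obtain ⟨x, hx, y, hy, hxy⟩ := hedge w w' hww
    exact ⟨f x, ⟨x, hx, rfl⟩, f y, ⟨y, hy, rfl⟩, hadj hxy⟩

/-- Restricting a shallow minor along a subgraph embedding of the pattern. -/
lemma shallowMinor_of_le {V W W' : Type} {G : SimpleGraph V} {H : SimpleGraph W}
    {H' : SimpleGraph W'} {d : ℕ} (hsub : IsSubgraphOf H' H) (h : IsShallowMinor G H d) :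
    IsShallowMinor G H' d := by
  obtain ⟨f, hinj, hadj⟩ := hsub
  obtain ⟨α, hcen, hdis, hedge⟩ := h
  exact ⟨fun w => α (f w), fun w => hcen (f w),
    fun w w' hww => hdis _ _ (fun e => hww (hinj e)),
    fun w w' hww => hedge _ _ (hadj hww)⟩

end Helpers2

section PullDown
variable {U : Ultrafilter ℕ}

/-- Pull a shallow minor of a finite pattern down from the ultraproduct to a factor. -/
lemma pull_down {Vs : ℕ → Type} {Gs : ∀ n, SimpleGraph (Vs n)} {W : Type} [Finite W]
    {H : SimpleGraph W} {d : ℕ} (h : IsShallowMinor (UGraph U Gs) H d) :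
    ∃ n, IsShallowMinor (Gs n) H d := by
  obtain ⟨α, hcen, hdis, hedge⟩ := h
  choose c hc using hcen
  set E := {p : W × W // H.Adj p.1 p.2} with hEdef
  choose a ha b hb hab using fun e : E => hedge e.1.1 e.1.2 e.2
  choose p1 hp1 using fun e : E => hc e.1.1 ⟨a e, ha e⟩
  choose p2 hp2 using fun e : E => hc e.1.2 ⟨b e, hb e⟩
  -- index type for the relevant vertices of the branch set of `w`
  let ι : W → Type := fun w =>
    Unit ⊕ ({e : E // e.1.1 = w} × Fin (d + 1)) ⊕ ({e : E // e.1.2 = w} × Fin (d + 1))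
  have hιfin : ∀ w, Finite (ι w) := fun w => by infer_instance
  let kfun : ∀ w : W, ι w → UVertex U Vs := fun w z =>
    match z with
    | .inl _ => ((c w : (α w).verts) : UVertex U Vs)
    | .inr (.inl (e, i)) => (((p1 e.1).getVert i : (α e.1.1.1).verts) : UVertex U Vs)
    | .inr (.inr (e, i)) => (((p2 e.1).getVert i : (α e.1.1.2).verts) : UVertex U Vs)
  have hkmem : ∀ w z, kfun w z ∈ (α w).verts := by
    rintro w (z | ⟨⟨e, he⟩, i⟩ | ⟨⟨e, he⟩, i⟩)
    · exact (c w).2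
    · exact he ▸ ((p1 e).getVert i).2
    · exact he ▸ ((p2 e).getVert i).2
  -- the finitely many conditions, each holding on a set of the ultrafilter
  have h1 : ∀ᶠ n in (U : Filter ℕ), ∀ ei : E × Fin (d + 1), (ei.2 : ℕ) < (p1 ei.1).length →
      (Gs n).Adj ((((p1 ei.1).getVert ei.2 : (α ei.1.1.1).verts) : UVertex U Vs).out n)
        ((((p1 ei.1).getVert ((ei.2 : ℕ) + 1) : (α ei.1.1.1).verts) : UVertex U Vs).out n) := by
    rw [eventually_all]
    rintro ⟨e, i⟩
    by_cases hlt : (i : ℕ) < (p1 e).length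
    · have := (α e.1.1).adj_sub ((p1 e).adj_getVert_succ hlt)
      exact (ugraph_adj_out.1 this).mono fun n hn _ => hn
    · exact Eventually.of_forall fun n hlt' => absurd hlt' hlt
  have h2 : ∀ᶠ n in (U : Filter ℕ), ∀ ei : E × Fin (d + 1), (ei.2 : ℕ) < (p2 ei.1).length →
      (Gs n).Adj ((((p2 ei.1).getVert ei.2 : (α ei.1.1.2).verts) : UVertex U Vs).out n)
        ((((p2 ei.1).getVert ((ei.2 : ℕ) + 1) : (α ei.1.1.2).verts) : UVertex U Vs).out n) := by
    rw [eventually_all]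
    rintro ⟨e, i⟩
    by_cases hlt : (i : ℕ) < (p2 e).length
    · have := (α e.1.2).adj_sub ((p2 e).adj_getVert_succ hlt)
      exact (ugraph_adj_out.1 this).mono fun n hn _ => hn
    · exact Eventually.of_forall fun n hlt' => absurd hlt' hlt
  have h3 : ∀ᶠ n in (U : Filter ℕ), ∀ e : E, (Gs n).Adj ((a e).out n) ((b e).out n) := by
    rw [eventually_all]
    exact fun e => ugraph_adj_out.1 (hab e)
  have h4 : ∀ᶠ n in (U : Filter ℕ), ∀ q : (w : W) × (w' : W) × ι w × ι w', q.1 ≠ q.2.1 →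
      (kfun q.1 q.2.2.1).out n ≠ (kfun q.2.1 q.2.2.2).out n := by
    rw [eventually_all]
    rintro ⟨w, w', z, z'⟩
    by_cases hww : w = w'
    · exact Eventually.of_forall fun n hne => absurd hww hne
    · have hne : kfun w z ≠ kfun w' z' := by
        intro he
        exact Set.disjoint_left.1 (hdis w w' hww) (hkmem w z) (he ▸ hkmem w' z')
      exact (ne_eventually_ne hne).mono fun n hn _ => hn
  obtain ⟨n, hn1, hn2, hn3, hn4⟩ := (h1.and (h2.and (h3.and h4))).exists
  clear h1 h2 h3 h4
  -- the branch sets in `Gs n`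
  refine ⟨n, fun w => (⊤ : (Gs n).Subgraph).induce
    (Set.range fun z : ι w => (kfun w z).out n), ?_, ?_, ?_⟩
  · intro w
    refine ⟨⟨((c w : (α w).verts) : UVertex U Vs).out n, ⟨Sum.inl (), rfl⟩⟩, ?_⟩
    rintro ⟨x, z, rfl⟩
    -- a general claim producing walks to every indexed vertex
    obtain (u | ⟨⟨e, he⟩, i⟩ | ⟨⟨e, he⟩, i⟩) := z
    · exact ⟨Walk.nil.copy rfl (Subtype.ext rfl), by simp⟩
    · subst he
      set L := (p1 e).length with hL
      have hLd : L ≤ d := hp1 e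
      set i' := min (i : ℕ) L with hi'
      have hmemF : ∀ j ≤ i',
          (((p1 e).getVert j : (α e.1.1).verts) : UVertex U Vs).out n ∈
            Set.range fun z : ι e.1.1 => (kfun e.1.1 z).out n := by
        intro j hj
        exact ⟨Sum.inr (Sum.inl (⟨⟨e, rfl⟩, ⟨j, by omega⟩⟩)), rfl⟩
      have hadjF : ∀ j < i', (Gs n).Adj
          ((((p1 e).getVert j : (α e.1.1).verts) : UVertex U Vs).out n)
          ((((p1 e).getVert (j+1) : (α e.1.1).verts) : UVertex U Vs).out n) := by
        intro j hj
        exact hn1 (e, ⟨j, by omega⟩) (by simpa using by omega)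
      obtain ⟨q, hq⟩ := chain_walk_induce (Gs n) _
        (fun j => (((p1 e).getVert j : (α e.1.1).verts) : UVertex U Vs).out n) i' hmemF hadjF
      have hend : (p1 e).getVert i' = (p1 e).getVert i := by
        rcases le_or_gt (i : ℕ) L with hcase | hcase
        · rw [hi', min_eq_left hcase]
        · rw [hi', min_eq_right hcase.le, (p1 e).getVert_of_length_le (le_refl L),
            (p1 e).getVert_of_length_le (by omega : (p1 e).length ≤ (i : ℕ))]
      have h0 : (((p1 e).getVert 0 : (α e.1.1).verts) : UVertex U Vs).out n
          = ((c e.1.1 : (α e.1.1).verts) : UVertex U Vs).out n := by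
        rw [(p1 e).getVert_zero]
      have h1eq : (((p1 e).getVert i' : (α e.1.1).verts) : UVertex U Vs).out n
          = (((p1 e).getVert (i : ℕ) : (α e.1.1).verts) : UVertex U Vs).out n := by
        rw [hend]
      refine ⟨q.copy (Subtype.ext h0) (Subtype.ext h1eq),
        by rw [Walk.length_copy, hq]; omega⟩
    · subst he
      set L := (p2 e).length with hL
      have hLd : L ≤ d := hp2 e
      set i' := min (i : ℕ) L with hi'
      have hmemF : ∀ j ≤ i',
          (((p2 e).getVert j : (α e.1.2).verts) : UVertex U Vs).out n ∈
            Set.range fun z : ι e.1.2 => (kfun e.1.2 z).out n := by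
        intro j hj
        exact ⟨Sum.inr (Sum.inr (⟨⟨e, rfl⟩, ⟨j, by omega⟩⟩)), rfl⟩
      have hadjF : ∀ j < i', (Gs n).Adj
          ((((p2 e).getVert j : (α e.1.2).verts) : UVertex U Vs).out n)
          ((((p2 e).getVert (j+1) : (α e.1.2).verts) : UVertex U Vs).out n) := by
        intro j hj
        exact hn2 (e, ⟨j, by omega⟩) (by simpa using by omega)
      obtain ⟨q, hq⟩ := chain_walk_induce (Gs n) _
        (fun j => (((p2 e).getVert j : (α e.1.2).verts) : UVertex U Vs).out n) i' hmemF hadjF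
      have hend : (p2 e).getVert i' = (p2 e).getVert i := by
        rcases le_or_gt (i : ℕ) L with hcase | hcase
        · rw [hi', min_eq_left hcase]
        · rw [hi', min_eq_right hcase.le, (p2 e).getVert_of_length_le (le_refl L),
            (p2 e).getVert_of_length_le (by omega : (p2 e).length ≤ (i : ℕ))]
      have h0 : (((p2 e).getVert 0 : (α e.1.2).verts) : UVertex U Vs).out n
          = ((c e.1.2 : (α e.1.2).verts) : UVertex U Vs).out n := by
        rw [(p2 e).getVert_zero]
      have h1eq : (((p2 e).getVert i' : (α e.1.2).verts) : UVertex U Vs).out n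
          = (((p2 e).getVert (i : ℕ) : (α e.1.2).verts) : UVertex U Vs).out n := by
        rw [hend]
      refine ⟨q.copy (Subtype.ext h0) (Subtype.ext h1eq),
        by rw [Walk.length_copy, hq]; omega⟩
  · intro w w' hww
    rw [Set.disjoint_left]
    rintro v ⟨z, rfl⟩ ⟨z', hz'⟩
    exact hn4 ⟨w, w', z, z'⟩ hww hz'.symm
  · intro w w' hadjw
    refine ⟨(a ⟨(w, w'), hadjw⟩).out n, ?_, (b ⟨(w, w'), hadjw⟩).out n, ?_, hn3 ⟨(w, w'), hadjw⟩⟩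
    · refine ⟨Sum.inr (Sum.inl ⟨⟨⟨(w, w'), hadjw⟩, rfl⟩,
        ⟨(p1 ⟨(w, w'), hadjw⟩).length, by have := hp1 ⟨(w, w'), hadjw⟩; omega⟩⟩), ?_⟩
      show ((((p1 ⟨(w, w'), hadjw⟩).getVert ((p1 ⟨(w, w'), hadjw⟩).length) :
          (α _).verts) : UVertex U Vs)).out n = _
      rw [(p1 ⟨(w, w'), hadjw⟩).getVert_length]
    · refine ⟨Sum.inr (Sum.inr ⟨⟨⟨(w, w'), hadjw⟩, rfl⟩,
        ⟨(p2 ⟨(w, w'), hadjw⟩).length, by have := hp2 ⟨(w, w'), hadjw⟩; omega⟩⟩), ?_⟩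
      show ((((p2 ⟨(w, w'), hadjw⟩).getVert ((p2 ⟨(w, w'), hadjw⟩).length) :
          (α _).verts) : UVertex U Vs)).out n = _
      rw [(p2 ⟨(w, w'), hadjw⟩).getVert_length]

end PullDown

section ConstructionA

/-- From models of all finite cliques at depth `d` in the class, build a model of the
continuum clique at depth `d` in an ultraproduct. -/
lemma construction_A (U : Ultrafilter ℕ) (hU : ∀ a : ℕ, {a} ∉ U) (C : GraphClass) {d : ℕ}
    (h2 : ∀ (W : Type) (H : SimpleGraph W), Finite W → InClassMinor C d H) :
    InLimitMinor U C d Kcontinuum := by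
  classical
  have h2' : ∀ n : ℕ, ∃ (V : Type) (G : SimpleGraph V), C V G ∧
      ∃ β, IsShallowMinorModel G (⊤ : SimpleGraph (Fin (n + 1))) d β :=
    fun n => h2 (Fin (n + 1)) ⊤ inferInstance
  choose Vs Gs hC α hmod using h2'
  choose c hc using fun n => (hmod n).1
  -- the vertex of the `(n+1)`-clique assigned to `A ⊆ ℕ` at stage `n`
  have hidxlt : ∀ (A : Set ℕ) (n : ℕ), enc A (Nat.log 2 (n + 1)) < n + 1 :=
    fun A n => lt_of_lt_of_le (enc_lt A _) (Nat.pow_log_le_self 2 (Nat.succ_ne_zero n))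
  set idx : Set ℕ → ∀ n : ℕ, Fin (n + 1) := fun A n => ⟨enc A (Nat.log 2 (n + 1)), hidxlt A n⟩
    with hidxdef
  have hidx_ne : ∀ A A' : Set ℕ, A ≠ A' →
      ∀ᶠ n in (U : Filter ℕ), idx A n ≠ idx A' n := by
    intro A A' hAA
    have hk : ∃ k, ¬(k ∈ A ↔ k ∈ A') := by
      by_contra hcon
      push_neg at hcon
      exact hAA (Set.ext fun k => hcon k)
    obtain ⟨k, hk⟩ := hk
    have hsub : {n : ℕ | 2 ^ (k + 1) ≤ n + 1} ⊆ {n : ℕ | idx A n ≠ idx A' n} := by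
      intro n hn he
      have hm : k + 1 ≤ Nat.log 2 (n + 1) :=
        (Nat.le_log_iff_pow_le one_lt_two (Nat.succ_ne_zero n)).2 hn
      have : enc A (Nat.log 2 (n + 1)) = enc A' (Nat.log 2 (n + 1)) :=
        congrArg Fin.val he
      exact hk (enc_inj _ this k (by omega))
    refine Filter.mem_of_superset (cofinite_mem hU ?_) hsub
    refine Set.Finite.subset (Set.finite_Iio (2 ^ (k + 1))) ?_
    intro n hn
    simp only [Set.mem_compl_iff, Set.mem_setOf_eq, not_le] at hn
    simp only [Set.mem_Iio]
    omega
  -- branch sets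
  set B : Set ℕ → Set (UVertex U Vs) :=
    fun A => {x | ∀ᶠ n in (U : Filter ℕ), x.out n ∈ (α n (idx A n)).verts} with hBdef
  set cA : Set ℕ → UVertex U Vs :=
    fun A => mkU U Vs (fun n => ((c n (idx A n) : (α n (idx A n)).verts) : Vs n)) with hcAdef
  have hcA_mem : ∀ A, cA A ∈ B A := by
    intro A
    have h := out_agree (U := U) (Vs := Vs)
      (fun n => ((c n (idx A n) : (α n (idx A n)).verts) : Vs n))
    refine h.mono fun n hn => ?_
    show (cA A).out n ∈ (α n (idx A n)).verts
    have he : (cA A).out n = ((c n (idx A n) : (α n (idx A n)).verts) : Vs n) := hn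
    rw [he]
    exact (c n (idx A n)).2
  refine ⟨UVertex U Vs, UGraph U Gs,
    ⟨Vs, Gs, hC, id, Function.injective_id, fun u v h => h⟩,
    fun A => (⊤ : (UGraph U Gs).Subgraph).induce (B A), ?_, ?_, ?_⟩
  · -- centers and radius
    intro A
    refine ⟨⟨cA A, hcA_mem A⟩, ?_⟩
    rintro ⟨x, hx⟩
    have hwx : ∀ n, ∀ h : x.out n ∈ (α n (idx A n)).verts,
        ∃ p : (α n (idx A n)).coe.Walk (c n (idx A n)) ⟨x.out n, h⟩, p.length ≤ d :=
      fun n h => hc n (idx A n) ⟨x.out n, h⟩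
    choose p hp using hwx
    -- choose a length `ℓ` occurring on a set of the ultrafilter
    have hM : {n | x.out n ∈ (α n (idx A n)).verts} ∈ U := hx
    have hcover : {n | x.out n ∈ (α n (idx A n)).verts} ⊆
        ⋃ ℓ ∈ (Finset.range (d + 1) : Finset ℕ),
          {n | ∃ h : x.out n ∈ (α n (idx A n)).verts, (p n h).length = ℓ} := by
      intro n hn
      simp only [Set.mem_iUnion]
      exact ⟨(p n hn).length, by simpa [Finset.mem_range, Nat.lt_succ_iff] using hp n hn,
        hn, rfl⟩
    have hUn : (⋃ ℓ ∈ (Finset.range (d + 1) : Finset ℕ),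
        {n | ∃ h : x.out n ∈ (α n (idx A n)).verts, (p n h).length = ℓ}) ∈ U :=
      Filter.mem_of_superset hM hcover
    obtain ⟨ℓ, hℓmem, hS⟩ := (Ultrafilter.finite_biUnion_mem_iff
      (Finset.range (d + 1)).finite_toSet).1 hUn
    have hld : ℓ ≤ d := by simpa [Nat.lt_succ_iff] using hℓmem
    -- the chain of ultraproduct vertices along the walks
    set F : ℕ → UVertex U Vs := fun i => mkU U Vs (fun n =>
      if h : x.out n ∈ (α n (idx A n)).verts
        then (((p n h).getVert i : (α n (idx A n)).verts) : Vs n) else x.out n) with hFdef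
    have hF0 : F 0 = cA A := by
      refine mkU_eq_iff.2 ?_
      refine Filter.Eventually.mono hM fun n hn => ?_
      rw [dif_pos hn, (p n hn).getVert_zero]
    have hFl : F ℓ = x := by
      have : F ℓ = mkU U Vs x.out := by
        refine mkU_eq_iff.2 ?_
        refine Filter.Eventually.mono hS fun n hn => ?_
        obtain ⟨h, hlen⟩ := hn
        rw [dif_pos h, ← hlen, (p n h).getVert_length]
      rw [this, mkU_out]
    have hFmem : ∀ i, i ≤ ℓ → F i ∈ B A := by
      intro i _
      have hoa := out_agree (U := U) (Vs := Vs) (fun n =>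
        if h : x.out n ∈ (α n (idx A n)).verts
          then (((p n h).getVert i : (α n (idx A n)).verts) : Vs n) else x.out n)
      show ∀ᶠ n in (U : Filter ℕ), (F i).out n ∈ (α n (idx A n)).verts
      refine (hoa.and hM).mono fun n hn => ?_
      have he : (F i).out n = _ := hn.1
      rw [he, dif_pos hn.2]
      exact ((p n hn.2).getVert i).2
    have hFadj : ∀ i, i < ℓ → (UGraph U Gs).Adj (F i) (F (i + 1)) := by
      intro i hi
      refine ugraph_adj_mk.2 (Filter.Eventually.mono hS fun n hn => ?_)
      obtain ⟨h, hlen⟩ := hn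
      rw [dif_pos h, dif_pos h]
      exact (α n (idx A n)).adj_sub ((p n h).adj_getVert_succ (by omega))
    obtain ⟨q, hq⟩ := chain_walk_induce (UGraph U Gs) (B A) F ℓ hFmem hFadj
    exact ⟨q.copy (Subtype.ext hF0) (Subtype.ext hFl), by rw [Walk.length_copy, hq]; exact hld⟩
  · -- disjointness
    intro A A' hAA
    rw [Set.disjoint_left]
    intro y hyA hyA'
    have hall := (hyA.and (hyA'.and (hidx_ne A A' hAA))).exists
    obtain ⟨n, h1, h2, h3⟩ := hall
    exact Set.disjoint_left.1 ((hmod n).2.1 _ _ h3) h1 h2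
  · -- edges
    intro A A' hAA
    have hne : A ≠ A' := hAA.ne
    have hxy : ∀ n, ∀ _h : idx A n ≠ idx A' n,
        ∃ x ∈ (α n (idx A n)).verts, ∃ y ∈ (α n (idx A' n)).verts, (Gs n).Adj x y :=
      fun n h => (hmod n).2.2 _ _ (by simpa using h)
    choose xx hxx yy hyy hadj using hxy
    set gx : ∀ n, Vs n := fun n =>
      if h : idx A n ≠ idx A' n then xx n h else ((c n (idx A n) : _) : Vs n) with hgx
    set gy : ∀ n, Vs n := fun n =>
      if h : idx A n ≠ idx A' n then yy n h else ((c n (idx A' n) : _) : Vs n) with hgy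
    have hev := hidx_ne A A' hne
    refine ⟨mkU U Vs gx, ?_, mkU U Vs gy, ?_, ?_⟩
    · have hoa := out_agree (U := U) (Vs := Vs) gx
      show ∀ᶠ n in (U : Filter ℕ), (mkU U Vs gx).out n ∈ (α n (idx A n)).verts
      refine (hoa.and hev).mono fun n hn => ?_
      rw [hn.1]
      show (if h : idx A n ≠ idx A' n then xx n h
        else ((c n (idx A n) : (α n (idx A n)).verts) : Vs n)) ∈ (α n (idx A n)).verts
      rw [dif_pos hn.2]
      exact hxx n hn.2
    · have hoa := out_agree (U := U) (Vs := Vs) gy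
      show ∀ᶠ n in (U : Filter ℕ), (mkU U Vs gy).out n ∈ (α n (idx A' n)).verts
      refine (hoa.and hev).mono fun n hn => ?_
      rw [hn.1]
      show (if h : idx A n ≠ idx A' n then yy n h
        else ((c n (idx A' n) : (α n (idx A' n)).verts) : Vs n)) ∈ (α n (idx A' n)).verts
      rw [dif_pos hn.2]
      exact hyy n hn.2
    · refine ugraph_adj_mk.2 (Filter.Eventually.mono hev fun n hn => ?_)
      show (Gs n).Adj (if h : idx A n ≠ idx A' n then xx n h
          else ((c n (idx A n) : (α n (idx A n)).verts) : Vs n))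
        (if h : idx A n ≠ idx A' n then yy n h
          else ((c n (idx A' n) : (α n (idx A' n)).verts) : Vs n))
      rw [dif_pos hn, dif_pos hn]
      exact hadj n hn

end ConstructionA
/-- For a class `C` of finite graphs, the following are equivalent:
(1) `C` is somewhere dense; (2) every finite graph is in `C ▽ d` for some `d`;
(3) every finite graph is in `C* ▽ d` for some `d`; (4) `K_ω ∈ C* ▽ ω`;
(5) `K_𝔠 ∈ C* ▽ ω`. -/
theorem dense_equiv (U : Ultrafilter ℕ) (hU : ∀ a : ℕ, {a} ∉ U)
    (C : GraphClass) (hfin : FiniteClass C) :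
    [SomewhereDense C,
     ∃ d : ℕ, ∀ (W : Type) (H : SimpleGraph W), Finite W → InClassMinor C d H,
     ∃ d : ℕ, ∀ (W : Type) (H : SimpleGraph W), Finite W → InLimitMinor U C d H,
     ∃ d : ℕ, InLimitMinor U C d Komega,
     ∃ d : ℕ, InLimitMinor U C d Kcontinuum].TFAE := by
  tfae_have 1 ↔ 2 := Iff.rfl
  tfae_have 2 → 5 := by
    rintro ⟨d, h2⟩
    exact ⟨d, construction_A U hU C h2⟩
  tfae_have 5 → 4 := by
    rintro ⟨d, V, G, hlim, hmin⟩
    refine ⟨d, V, G, hlim, shallowMinor_of_le ⟨fun k => {k}, Set.singleton_injective, ?_⟩ hmin⟩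
    intro u v h
    exact fun e => h.ne (Set.singleton_injective e)
  tfae_have 4 → 3 := by
    rintro ⟨d, V, G, hlim, hmin⟩
    refine ⟨d, fun W H hW => ⟨V, G, hlim, shallowMinor_of_le ?_ hmin⟩⟩
    haveI := hW
    obtain ⟨f, hf⟩ := exists_injective_nat W
    exact ⟨f, hf, fun u v h => fun e => h.ne (hf e)⟩
  tfae_have 3 → 2 := by
    rintro ⟨d, h3⟩
    refine ⟨d, fun W H hW => ?_⟩
    haveI := hW
    obtain ⟨V, G, ⟨Vs, Gs, hC, hsub⟩, hmin⟩ := h3 W H hW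
    obtain ⟨n, hn⟩ := pull_down (shallowMinor_mono hsub hmin)
    exact ⟨Vs n, Gs n, hC n, hn⟩
  tfae_finish

end NWD
end

section
/- Let C be a class of finite graphs. The following are equivalent: (1) C is topologically somewhere dense; (2) every finite graph belongs to C∇̃d for some d ∈ ℕ; (3) every finite graph belongs to C*∇̃d for some d ∈ ℕ; (4) the countably infinite clique K_ω belongs to C*∇̃ω; (5) the clique K_𝔠 on continuum many vertices belongs to C*∇̃ω. -/
namespace NWD

open SimpleGraph Filter

section AuxTest

variable {U : Ultrafilter ℕ}

lemma not_mem_of_finite (hU : ∀ a : ℕ, {a} ∉ U) {s : Set ℕ} (hs : s.Finite) : s ∉ U := by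
  refine Set.Finite.induction_on (motive := fun s _ => s ∉ U) s hs U.empty_notMem ?_
  intro a s _ _ ih h
  rw [Set.insert_eq, Ultrafilter.union_mem_iff] at h
  exact h.elim (hU a) ih

lemma ev_cofinite (hU : ∀ a : ℕ, {a} ∉ U) {p : ℕ → Prop} (h : {n | ¬ p n}.Finite) :
    ∀ᶠ n in ↑U, p n := by
  have h2 := not_mem_of_finite hU h
  rw [← Ultrafilter.compl_mem_iff_notMem] at h2
  have : {n | ¬ p n}ᶜ = {n | p n} := by ext n; simp
  rw [this] at h2
  exact h2

lemma ev_const {α : Type} [Finite α] (t : ℕ → α) : ∃ a, ∀ᶠ n in ↑U, t n = a := by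
  obtain ⟨a, ha⟩ := (U.map t).eq_pure_of_finite
  refine ⟨a, ?_⟩
  have : {a} ∈ U.map t := by rw [ha]; exact rfl
  exact Ultrafilter.mem_map.mp (by simpa using this)

/-- ultrafilter: eventually or implies or of eventuallys -/
lemma ev_or {p q : ℕ → Prop} (h : ∀ᶠ n in ↑U, p n ∨ q n) :
    (∀ᶠ n in ↑U, p n) ∨ (∀ᶠ n in ↑U, q n) := by
  have h' : {n | p n} ∪ {n | q n} ∈ U := by
    rw [← Set.setOf_or]; exact h
  exact Ultrafilter.union_mem_iff.mp h'

end AuxTest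

section WalkAux

variable {V : Type} {G : SimpleGraph V}

/-- Build a walk from a vertex sequence. -/
def walkOfFn (G : SimpleGraph V) (g : ℕ → V) :
    ∀ (ℓ : ℕ), (∀ i < ℓ, G.Adj (g i) (g (i + 1))) → G.Walk (g 0) (g ℓ)
  | 0, _ => SimpleGraph.Walk.nil
  | (ℓ + 1), h =>
      (walkOfFn G g ℓ fun i hi => h i (Nat.lt_succ_of_lt hi)).concat (h ℓ (Nat.lt_succ_self ℓ))

lemma walkOfFn_length (g : ℕ → V) (ℓ : ℕ) (h : ∀ i < ℓ, G.Adj (g i) (g (i + 1))) :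
    (walkOfFn G g ℓ h).length = ℓ := by
  induction ℓ with
  | zero => rfl
  | succ ℓ ih => simp [walkOfFn, SimpleGraph.Walk.length_concat, ih]

lemma walkOfFn_support (g : ℕ → V) (ℓ : ℕ) (h : ∀ i < ℓ, G.Adj (g i) (g (i + 1))) :
    (walkOfFn G g ℓ h).support = (List.range (ℓ + 1)).map g := by
  induction ℓ with
  | zero => rfl
  | succ ℓ ih =>
    rw [List.range_succ]
    simp [walkOfFn, SimpleGraph.Walk.support_concat, ih]

lemma getVert_mem_support {u v : V} (p : G.Walk u v) (i : ℕ) : p.getVert i ∈ p.support := by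
  rcases le_or_gt i p.length with h | h
  · exact SimpleGraph.Walk.mem_support_iff_exists_getVert.mpr ⟨i, rfl, h⟩
  · rw [SimpleGraph.Walk.getVert_of_length_le _ h.le]
    exact SimpleGraph.Walk.end_mem_support p

lemma path_getVert_inj {u v : V} {p : G.Walk u v} (hp : p.IsPath) :
    ∀ {i j : ℕ}, i ≤ p.length → j ≤ p.length → p.getVert i = p.getVert j → i = j := by
  induction p with
  | nil => intro i j hi hj _; simp at hi hj; omega
  | @cons a b c hadj q ih =>
    intro i j hi hj hij
    rw [SimpleGraph.Walk.cons_isPath_iff] at hp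
    match i, j with
    | 0, 0 => rfl
    | 0, (j+1) =>
      exfalso
      rw [SimpleGraph.Walk.getVert_zero] at hij
      exact hp.2 (hij ▸ getVert_mem_support q j)
    | (i+1), 0 =>
      exfalso
      rw [SimpleGraph.Walk.getVert_zero] at hij
      exact hp.2 (hij ▸ getVert_mem_support q i)
    | (i+1), (j+1) =>
      simp only [SimpleGraph.Walk.getVert_cons_succ] at hij
      simp only [SimpleGraph.Walk.length_cons] at hi hj
      exact congrArg (· + 1) (ih hp.1 (by omega) (by omega) hij)

end WalkAux


section ModelAux

variable {U : Ultrafilter ℕ}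

lemma ugraph_adj {Vs : ℕ → Type} (Gs : ∀ n, SimpleGraph (Vs n)) (g h : ∀ n, Vs n) :
    (UGraph U Gs).Adj (Quotient.mk (prodSetoid U Vs) g) (Quotient.mk (prodSetoid U Vs) h) ↔
      ∀ᶠ n in ↑U, (Gs n).Adj (g n) (h n) := Iff.rfl

lemma rep_eventually_ne {Vs : ℕ → Type} {x y : UVertex U Vs} (h : x ≠ y) :
    ∀ᶠ n in ↑U, x.out n ≠ y.out n := by
  have hne : ¬ (∀ᶠ n in ↑U, x.out n = y.out n) := by
    intro he
    exact h (by
      rw [← Quotient.out_eq x, ← Quotient.out_eq y]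
      exact Quotient.sound he)
  have h2 : {n | x.out n = y.out n} ∉ U := hne
  rw [← Ultrafilter.compl_mem_iff_notMem] at h2
  have he : {n | x.out n = y.out n}ᶜ = {n | x.out n ≠ y.out n} := by ext n; simp
  rw [he] at h2
  exact h2

lemma rep_eventually_adj {Vs : ℕ → Type} {Gs : ∀ n, SimpleGraph (Vs n)}
    {x y : UVertex U Vs} (h : (UGraph U Gs).Adj x y) :
    ∀ᶠ n in ↑U, (Gs n).Adj (x.out n) (y.out n) := by
  rw [← Quotient.out_eq x, ← Quotient.out_eq y] at h
  exact h

/-- Symmetrization: to exhibit a topological shallow minor model it suffices to give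
walks for each ordered pair of adjacent vertices, without the symmetry condition. -/
lemma symmetrize {V W : Type} {G : SimpleGraph V} {H : SimpleGraph W} {d : ℕ} {f : W → V}
    (hf : Function.Injective f) (Q : ∀ u v : W, H.Adj u v → G.Walk (f u) (f v))
    (hp : ∀ u v h, (Q u v h).IsPath)
    (hl : ∀ u v h, (Q u v h).length ≤ 2 * d + 1)
    (hd : ∀ u v u' v' (h : H.Adj u v) (h' : H.Adj u' v'), s(u, v) ≠ s(u', v') →
      ∀ x, x ∈ (Q u v h).support → x ∈ (Q u' v' h').support →
        (x = f u ∨ x = f v) ∧ (x = f u' ∨ x = f v')) :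
    IsTopShallowMinor G H d := by
  classical
  refine ⟨f, fun u v h =>
    if hr : WellOrderingRel u v then Q u v h else (Q v u h.symm).reverse, hf, ?_, ?_, ?_, ?_⟩
  · intro u v h
    dsimp only
    by_cases hr : WellOrderingRel u v
    · rw [dif_pos hr]; exact hp u v h
    · rw [dif_neg hr]; exact (Walk.isPath_reverse_iff _).mpr (hp v u h.symm)
  · intro u v h
    dsimp only
    by_cases hr : WellOrderingRel u v
    · rw [dif_pos hr]; exact hl u v h
    · rw [dif_neg hr, Walk.length_reverse]; exact hl v u h.symm
  · intro u v h
    dsimp only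
    rcases trichotomous_of WellOrderingRel u v with hr | he | hr
    · have hnr : ¬ WellOrderingRel v u := asymm hr
      rw [dif_neg hnr, dif_pos hr]
    · exact absurd he h.ne
    · have hnr : ¬ WellOrderingRel u v := asymm hr
      rw [dif_pos hr, dif_neg hnr, Walk.reverse_reverse]
  · intro u v u' v' h h' hne x hx hx'
    dsimp only at hx hx'
    have hne2 : s(u, v) ≠ s(v', u') := fun e => hne (e.trans Sym2.eq_swap)
    have hne3 : s(v, u) ≠ s(u', v') := fun e => hne (Sym2.eq_swap.trans e)
    have hne4 : s(v, u) ≠ s(v', u') := fun e => hne (Sym2.eq_swap.trans (e.trans Sym2.eq_swap))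
    by_cases hr : WellOrderingRel u v <;> by_cases hr' : WellOrderingRel u' v'
    · rw [dif_pos hr] at hx; rw [dif_pos hr'] at hx'
      exact hd u v u' v' h h' hne x hx hx'
    · rw [dif_pos hr] at hx; rw [dif_neg hr'] at hx'
      rw [Walk.support_reverse, List.mem_reverse] at hx'
      exact (and_congr Iff.rfl or_comm).mp (hd u v v' u' h h'.symm hne2 x hx hx')
    · rw [dif_neg hr] at hx; rw [dif_pos hr'] at hx'
      rw [Walk.support_reverse, List.mem_reverse] at hx
      exact (and_congr or_comm Iff.rfl).mp (hd v u u' v' h.symm h' hne3 x hx hx')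
    · rw [dif_neg hr] at hx; rw [dif_neg hr'] at hx'
      rw [Walk.support_reverse, List.mem_reverse] at hx hx'
      exact (and_congr or_comm or_comm).mp (hd v u v' u' h.symm h'.symm hne4 x hx hx')

/-- Being a topological shallow minor is inherited along graph embeddings of the pattern. -/
lemma restrict {V W W' : Type} {G : SimpleGraph V} {H : SimpleGraph W} {K : SimpleGraph W'}
    {d : ℕ} (g : W → W') (hg : Function.Injective g)
    (hadj : ∀ ⦃u v⦄, H.Adj u v → K.Adj (g u) (g v))
    (hK : IsTopShallowMinor G K d) : IsTopShallowMinor G H d := by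
  obtain ⟨f, P, hfinj, hp, hl, hs, hd⟩ := hK
  refine ⟨f ∘ g, fun u v h => P (hadj h), hfinj.comp hg, fun u v h => hp _,
    fun u v h => hl _, fun u v h => hs (hadj h), ?_⟩
  intro u v u' v' h h' hne x hx hx'
  refine hd (hadj h) (hadj h') ?_ x hx hx'
  intro e
  apply hne
  rw [Sym2.eq_iff] at e ⊢
  rcases e with ⟨e1, e2⟩ | ⟨e1, e2⟩
  · exact Or.inl ⟨hg e1, hg e2⟩
  · exact Or.inr ⟨hg e1, hg e2⟩

end ModelAux


/-- For a class `C` of finite graphs, the following are equivalent: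
(1) `C` is topologically somewhere dense; (2) every finite graph is in `C ∇̃ d` for some `d`;
(3) every finite graph is in `C* ∇̃ d` for some `d`; (4) `K_ω ∈ C* ∇̃ ω`;
(5) `K_𝔠 ∈ C* ∇̃ ω`. -/
theorem top_dense_equiv (U : Ultrafilter ℕ) (hU : ∀ a : ℕ, {a} ∉ U)
    (C : GraphClass) (hfin : FiniteClass C) :
    [TopSomewhereDense C,
     ∃ d : ℕ, ∀ (W : Type) (H : SimpleGraph W), Finite W → InClassTopMinor C d H,
     ∃ d : ℕ, ∀ (W : Type) (H : SimpleGraph W), Finite W → InLimitTopMinor U C d H,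
     ∃ d : ℕ, InLimitTopMinor U C d Komega,
     ∃ d : ℕ, InLimitTopMinor U C d Kcontinuum].TFAE := by
  classical
  have topAdj : ∀ (k : ℕ) (A B : Set (Fin k)), A ≠ B →
      (⊤ : SimpleGraph (Set (Fin k))).Adj A B := by
    intro k A B h; simpa [top_adj] using h
  tfae_have 1 ↔ 2 := Iff.rfl
  tfae_have 2 → 3 := by
    rintro ⟨d, h2⟩
    refine ⟨d, fun W H hW => ?_⟩
    obtain ⟨V, G, hG, hm⟩ := h2 W H hW
    refine ⟨V, G, ⟨fun _ => V, fun _ => G, fun _ => hG,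
      fun v => Quotient.mk (prodSetoid U fun _ => V) (fun _ => v), ?_, ?_⟩, hm⟩
    · intro a b hab
      have h1 : ∀ᶠ n in (U : Filter ℕ), (fun _ : ℕ => a) n = (fun _ : ℕ => b) n :=
        Quotient.exact hab
      obtain ⟨n, hn⟩ := h1.exists
      exact hn
    · intro u v h
      exact (ugraph_adj (fun _ => G) _ _).mpr (Eventually.of_forall fun _ => h)
  tfae_have 5 → 4 := by
    rintro ⟨d, V, G, hG, hm⟩
    refine ⟨d, V, G, hG, restrict (fun n : ℕ => ({n} : Set ℕ)) Set.singleton_injective ?_ hm⟩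
    intro u v h
    simp only [Kcontinuum, top_adj]
    exact fun e => h.ne (Set.singleton_injective e)
  tfae_have 4 → 3 := by
    rintro ⟨d, V, G, hG, hm⟩
    refine ⟨d, fun W H hW => ⟨V, G, hG, ?_⟩⟩
    haveI := hW
    obtain ⟨g, hg⟩ := exists_injective_nat W
    refine restrict g hg ?_ hm
    intro u v h
    simp only [Komega, top_adj]
    exact fun e => h.ne (hg e)
  tfae_have 3 → 2 := by
    rintro ⟨d, h3⟩
    refine ⟨d, fun W H hW => ?_⟩
    haveI := hW
    obtain ⟨V, G, ⟨Vs, Gs, hCmem, g, hginj, hgadj⟩, f, P, hfinj, hpath, hlen, hsymm, hdisj⟩ :=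
      h3 W H hW
    let φ : G →g UGraph U Gs := ⟨g, fun {a b} h => hgadj h⟩
    have WqPath : ∀ {u v : W} (h : H.Adj u v), ((P h).map φ).IsPath :=
      fun h => Walk.map_isPath_of_injective hginj (hpath h)
    have WqLen : ∀ {u v : W} (h : H.Adj u v), ((P h).map φ).length ≤ 2 * d + 1 :=
      fun h => by rw [Walk.length_map]; exact hlen h
    have Finj : Function.Injective (fun u => g (f u)) := fun a b e => hfinj (hginj e)
    have Wdisj : ∀ (u v u' v' : W) (h : H.Adj u v) (h' : H.Adj u' v'), s(u, v) ≠ s(u', v') →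
        ∀ y, y ∈ ((P h).map φ).support → y ∈ ((P h').map φ).support →
          (y = g (f u) ∨ y = g (f v)) ∧ (y = g (f u') ∨ y = g (f v')) := by
      intro u v u' v' h h' hne y hy hy'
      rw [Walk.support_map, List.mem_map] at hy hy'
      obtain ⟨a, ha, rfl⟩ := hy
      obtain ⟨b, hb, he⟩ := hy'
      have hab : a = b := hginj he.symm
      rw [← hab] at hb
      obtain ⟨c1, c2⟩ := hdisj h h' hne a ha hb
      exact ⟨c1.imp (fun e => congrArg g e) (fun e => congrArg g e),
        c2.imp (fun e => congrArg g e) (fun e => congrArg g e)⟩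
    have E1 : ∀ᶠ n in ↑U, ∀ p : W × W, p.1 ≠ p.2 →
        (g (f p.1)).out n ≠ (g (f p.2)).out n := by
      rw [eventually_all]
      intro p
      by_cases hp : p.1 = p.2
      · exact Eventually.of_forall fun n h => absurd hp h
      · exact (rep_eventually_ne fun e => hp (Finj e)).mono fun n hn _ => hn
    have E2 : ∀ᶠ n in ↑U, ∀ q : W × W × Fin (2 * d + 2), ∀ h : H.Adj q.1 q.2.1,
        (q.2.2 : ℕ) < ((P h).map φ).length →
          (Gs n).Adj ((((P h).map φ).getVert q.2.2).out n)
            ((((P h).map φ).getVert (q.2.2 + 1)).out n) := by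
      rw [eventually_all]
      intro q
      by_cases hadj : H.Adj q.1 q.2.1
      · by_cases hlt : (q.2.2 : ℕ) < ((P hadj).map φ).length
        · exact (rep_eventually_adj (Walk.adj_getVert_succ _ hlt)).mono fun n hn h hl => hn
        · exact Eventually.of_forall fun n h hl => absurd hl hlt
      · exact Eventually.of_forall fun n h => absurd h hadj
    have E3 : ∀ᶠ n in ↑U, ∀ q : (W × W) × (W × W) × Fin (2 * d + 2) × Fin (2 * d + 2),
        ∀ (h : H.Adj q.1.1 q.1.2) (h' : H.Adj q.2.1.1 q.2.1.2),
          ((P h).map φ).getVert q.2.2.1 ≠ ((P h').map φ).getVert q.2.2.2 →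
            (((P h).map φ).getVert q.2.2.1).out n ≠ (((P h').map φ).getVert q.2.2.2).out n := by
      rw [eventually_all]
      intro q
      by_cases h : H.Adj q.1.1 q.1.2
      · by_cases h' : H.Adj q.2.1.1 q.2.1.2
        · by_cases hne : ((P h).map φ).getVert q.2.2.1 ≠ ((P h').map φ).getVert q.2.2.2
          · exact (rep_eventually_ne hne).mono fun n hn ha hb hc => hn
          · exact Eventually.of_forall fun n ha hb hc => absurd hc hne
        · exact Eventually.of_forall fun n ha hb => absurd hb h'
      · exact Eventually.of_forall fun n ha => absurd ha h
    obtain ⟨n, e1, e2, e3⟩ := (E1.and (E2.and E3)).exists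
    refine ⟨Vs n, Gs n, hCmem n, ?_⟩
    refine symmetrize (f := fun u => ((g (f u)).out n)) ?_
      (fun u v h => (walkOfFn (Gs n) (fun i => (((P h).map φ).getVert i).out n)
        ((P h).map φ).length
        (fun i hi => e2 (u, v, ⟨i, by have := WqLen h; omega⟩) h hi)).copy
        (congrArg (fun z : UVertex U Vs => Quotient.out z n) (Walk.getVert_zero _))
        (congrArg (fun z : UVertex U Vs => Quotient.out z n) (Walk.getVert_length _))) ?_ ?_ ?_
    · intro a b e
      by_contra hne
      exact e1 (a, b) hne e
    · intro u v h
      rw [Walk.isPath_copy, Walk.isPath_def, walkOfFn_support]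
      refine List.Nodup.map_on ?_ List.nodup_range
      intro i hi j hj e
      rw [List.mem_range] at hi hj
      have hb := WqLen h
      have hgv : ((P h).map φ).getVert i = ((P h).map φ).getVert j := by
        by_contra hne
        exact e3 ((u, v), (u, v), ⟨i, by omega⟩, ⟨j, by omega⟩) h h hne e
      exact path_getVert_inj (WqPath h) (by omega) (by omega) hgv
    · intro u v h
      rw [Walk.length_copy, walkOfFn_length]
      exact WqLen h
    · intro u v u' v' h h' hne x hx hx'
      rw [Walk.support_copy, walkOfFn_support, List.mem_map] at hx hx'
      obtain ⟨i, hi, rfl⟩ := hx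
      obtain ⟨j, hj, hji⟩ := hx'
      rw [List.mem_range] at hi hj
      have hb := WqLen h
      have hb' := WqLen h'
      have hgv : ((P h).map φ).getVert i = ((P h').map φ).getVert j := by
        by_contra hne2
        exact e3 ((u, v), (u', v'), ⟨i, by omega⟩, ⟨j, by omega⟩) h h' hne2 hji.symm
      have hy : ((P h).map φ).getVert i ∈ ((P h).map φ).support := getVert_mem_support _ i
      have hy' : ((P h).map φ).getVert i ∈ ((P h').map φ).support := by
        rw [hgv]; exact getVert_mem_support _ j
      obtain ⟨c1, c2⟩ := Wdisj u v u' v' h h' hne _ hy hy'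
      exact ⟨c1.imp (fun e => congrArg (fun z : UVertex U Vs => Quotient.out z n) e)
          (fun e => congrArg (fun z : UVertex U Vs => Quotient.out z n) e),
        c2.imp (fun e => congrArg (fun z : UVertex U Vs => Quotient.out z n) e)
          (fun e => congrArg (fun z : UVertex U Vs => Quotient.out z n) e)⟩
  tfae_have 2 → 5 := by
    rintro ⟨d, h2⟩
    have key : ∀ n : ℕ, InClassTopMinor C d (⊤ : SimpleGraph (Set (Fin n))) :=
      fun n => h2 (Set (Fin n)) ⊤ inferInstance
    choose Vs Gs hC hmin using key
    choose f P hmod using hmin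
    let proj : ∀ n : ℕ, Set ℕ → Set (Fin n) := fun n A => {i | (i : ℕ) ∈ A}
    have projNe : ∀ {A B : Set ℕ}, A ≠ B → ∀ᶠ n in ↑U, proj n A ≠ proj n B := by
      intro A B hAB
      have hex : ∃ m, ¬ (m ∈ A ↔ m ∈ B) := by
        by_contra hc
        push_neg at hc
        exact hAB (Set.ext fun m => hc m)
      obtain ⟨m, hm⟩ := hex
      apply ev_cofinite hU
      apply Set.Finite.subset (Set.finite_Iic m)
      intro k hk
      simp only [Set.mem_setOf_eq, not_not] at hk
      by_contra hkm
      simp only [Set.mem_Iic, not_le] at hkm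
      apply hm
      have h5 : (⟨m, hkm⟩ : Fin k) ∈ proj k A ↔ (⟨m, hkm⟩ : Fin k) ∈ proj k B := by rw [hk]
      simpa [proj] using h5
    let F : Set ℕ → UVertex U Vs := fun A => Quotient.mk (prodSetoid U Vs)
      (fun n => f n (proj n A))
    have FInj : Function.Injective F := by
      intro A B hFAB
      by_contra hne
      have h1 : ∀ᶠ nn in ↑U, f nn (proj nn A) = f nn (proj nn B) := Quotient.exact hFAB
      obtain ⟨nn, e, ne2⟩ := (h1.and (projNe hne)).exists
      exact ne2 ((hmod nn).1 e)
    have exQ : ∀ A B : Set ℕ, Kcontinuum.Adj A B →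
        ∃ q : (UGraph U Gs).Walk (F A) (F B), q.IsPath ∧ q.length ≤ 2 * d + 1 ∧
          ∀ x ∈ q.support, ∀ᶠ nn in ↑U, ∀ hp : proj nn A ≠ proj nn B,
            x.out nn ∈ (P nn (topAdj nn _ _ hp)).support := by
      intro A B hAB
      have hne : A ≠ B := hAB.ne
      have hev := projNe hne
      let t : ℕ → Fin (2 * d + 2) := fun nn =>
        if hp : proj nn A ≠ proj nn B then
          ⟨(P nn (topAdj nn _ _ hp)).length, by
            have := (hmod nn).2.2.1 (topAdj nn _ _ hp); omega⟩
        else ⟨0, by omega⟩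
      obtain ⟨ℓ, hℓ⟩ := ev_const t
      have hLle : (ℓ : ℕ) ≤ 2 * d + 1 := by have := ℓ.isLt; omega
      let q : ℕ → ∀ nn, Vs nn := fun i nn =>
        if hp : proj nn A ≠ proj nn B then (P nn (topAdj nn _ _ hp)).getVert i
        else f nn (proj nn A)
      have hlen' : ∀ᶠ nn in ↑U, ∃ hp : proj nn A ≠ proj nn B,
          (P nn (topAdj nn _ _ hp)).length = (ℓ : ℕ) := by
        filter_upwards [hev, hℓ] with nn hp ht
        refine ⟨hp, ?_⟩
        have h6 : (t nn : ℕ) = (ℓ : ℕ) := congrArg Fin.val ht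
        simp only [t] at h6
        rw [dif_pos hp] at h6
        exact h6
      have hadjq : ∀ i, i < (ℓ : ℕ) → (UGraph U Gs).Adj
          (Quotient.mk (prodSetoid U Vs) (q i)) (Quotient.mk (prodSetoid U Vs) (q (i + 1))) := by
        intro i hi
        rw [ugraph_adj]
        filter_upwards [hlen'] with nn hpl
        obtain ⟨hp, hlnn⟩ := hpl
        simp only [q, dif_pos hp]
        exact Walk.adj_getVert_succ _ (by omega)
      have h0 : Quotient.mk (prodSetoid U Vs) (q 0) = F A := by
        apply Quotient.sound
        show ∀ᶠ nn in ↑U, q 0 nn = f nn (proj nn A)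
        refine Eventually.of_forall fun nn => ?_
        by_cases hp : proj nn A ≠ proj nn B
        · simp only [q, dif_pos hp]; exact Walk.getVert_zero _
        · simp only [q, dif_neg hp]
      have hL : Quotient.mk (prodSetoid U Vs) (q (ℓ : ℕ)) = F B := by
        apply Quotient.sound
        show ∀ᶠ nn in ↑U, q (ℓ : ℕ) nn = f nn (proj nn B)
        filter_upwards [hlen'] with nn hpl
        obtain ⟨hp, hlnn⟩ := hpl
        simp only [q, dif_pos hp]
        rw [← hlnn, Walk.getVert_length]
      refine ⟨(walkOfFn (UGraph U Gs) (fun i => Quotient.mk (prodSetoid U Vs) (q i))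
        (ℓ : ℕ) hadjq).copy h0 hL, ?_, ?_, ?_⟩
      · refine (Walk.isPath_copy _ _ _).mpr ?_
        refine Walk.IsPath.mk' ((congrArg List.Nodup (walkOfFn_support _ _ _)).mpr ?_)
        refine List.Nodup.map_on ?_ List.nodup_range
        intro i hi j hj e
        rw [List.mem_range] at hi hj
        have hee : ∀ᶠ nn in ↑U, q i nn = q j nn := Quotient.exact e
        obtain ⟨nn, ⟨hp, hlnn⟩, heq⟩ := (hlen'.and hee).exists
        simp only [q, dif_pos hp] at heq
        exact path_getVert_inj ((hmod nn).2.1 (topAdj nn _ _ hp)) (by omega) (by omega) heq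
      · refine (Walk.length_copy _ _ _).trans_le ?_
        refine (walkOfFn_length _ _ _).trans_le ?_
        exact hLle
      · intro x hx
        replace hx := Eq.mp (congrArg (x ∈ ·) (Walk.support_copy _ _ _)) hx
        replace hx := Eq.mp (congrArg (x ∈ ·) (walkOfFn_support _ _ _)) hx
        replace hx := List.mem_map.mp hx
        obtain ⟨i, hi, rfl⟩ := hx
        rw [List.mem_range] at hi
        have hee : ∀ᶠ nn in ↑U, (Quotient.mk (prodSetoid U Vs) (q i)).out nn = q i nn :=
          Quotient.exact (Quotient.out_eq (Quotient.mk (prodSetoid U Vs) (q i)))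
        filter_upwards [hlen', hee] with nn hpl heq hp2
        obtain ⟨hp, hlnn⟩ := hpl
        rw [heq]
        simp only [q, dif_pos hp]
        exact getVert_mem_support _ i
    choose Q hQ using exQ
    refine ⟨d, UVertex U Vs, UGraph U Gs,
      ⟨Vs, Gs, hC, id, fun a b e => e, fun u v h => h⟩, ?_⟩
    refine symmetrize FInj Q (fun A B h => (hQ A B h).1) (fun A B h => (hQ A B h).2.1) ?_
    intro A B A' B' h h' hne x hx hx'
    have hs1 := (hQ A B h).2.2 x hx
    have hs2 := (hQ A' B' h').2.2 x hx'
    have hsym2 : ∀ᶠ nn in ↑U, s(proj nn A, proj nn B) ≠ s(proj nn A', proj nn B') := by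
      rw [Ne, Sym2.eq_iff, not_or] at hne
      obtain ⟨n1, n2⟩ := hne
      rcases not_and_or.mp n1 with h1 | h1 <;> rcases not_and_or.mp n2 with h2 | h2 <;>
      · filter_upwards [projNe h1, projNe h2] with nn d1 d2
        intro heq
        rw [Sym2.eq_iff] at heq
        rcases heq with ⟨e1, e2⟩ | ⟨e1, e2⟩ <;> tauto
    have hbig : ∀ᶠ nn in ↑U,
        (x.out nn = f nn (proj nn A) ∨ x.out nn = f nn (proj nn B)) ∧
          (x.out nn = f nn (proj nn A') ∨ x.out nn = f nn (proj nn B')) := by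
      filter_upwards [hs1, hs2, projNe h.ne, projNe h'.ne, hsym2] with nn s1 s2 p1 p2 snn
      exact (hmod nn).2.2.2.2 (topAdj nn _ _ p1) (topAdj nn _ _ p2) snn (x.out nn) (s1 p1) (s2 p2)
    have hxF : ∀ Y : Set ℕ, (∀ᶠ nn in ↑U, x.out nn = f nn (proj nn Y)) → x = F Y := by
      intro Y hy
      rw [← Quotient.out_eq x]
      exact Quotient.sound hy
    constructor
    · rcases ev_or (hbig.mono fun nn hn => hn.1) with hc | hc
      · exact Or.inl (hxF A hc)
      · exact Or.inr (hxF B hc)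
    · rcases ev_or (hbig.mono fun nn hn => hn.2) with hc | hc
      · exact Or.inl (hxF A' hc)
      · exact Or.inr (hxF B' hc)
  tfae_finish


end NWD
end

section
/- For every class C of finite graphs, the countably infinite clique K_ω belongs to C*▽ω if and only if K_ω belongs to C*∇̃ω; that is, C is limit somewhere dense if and only if C is limit topologically somewhere dense. -/
namespace NWD

open SimpleGraph Filter

section EquivLemmas

variable {V : Type} {G : SimpleGraph V}

lemma exists_walk_in_coe (B : G.Subgraph) {a b : V} (p : G.Walk a b) :
    p.toSubgraph ≤ B → ∀ (ha : a ∈ B.verts) (hb : b ∈ B.verts),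
      ∃ q : B.coe.Walk ⟨a, ha⟩ ⟨b, hb⟩, q.length ≤ p.length := by
  induction p with
  | nil =>
    intro _ ha hb
    exact ⟨Walk.nil, by simp⟩
  | @cons a c b h q ih =>
    intro hle ha hb
    have hle1 : G.subgraphOfAdj h ≤ B := le_trans le_sup_left hle
    have hle2 : q.toSubgraph ≤ B := le_trans le_sup_right hle
    have hadj : B.Adj a c := hle1.2 (by simp)
    have hc : c ∈ B.verts := hadj.snd_mem
    obtain ⟨q', hq'⟩ := ih hle2 hc hb
    exact ⟨Walk.cons (by exact hadj) q', by show q'.length + 1 ≤ q.length + 1; omega⟩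

lemma exists_trim {a b : V} (p : G.Walk a b) (hne : b ≠ a) :
    ∃ (x : V) (t : G.Walk a x) (h : G.Adj x b),
      p = t.append (Walk.cons h Walk.nil) := by
  obtain ⟨x, h, q, hq⟩ := Walk.exists_eq_cons_of_ne hne p.reverse
  refine ⟨x, q.reverse, h.symm, ?_⟩
  rw [← p.reverse_reverse, hq, Walk.reverse_cons]

lemma komega_adj {u v : ℕ} (h : u ≠ v) : Komega.Adj u v := by
  simp [Komega, h]

lemma top_to_minor {d : ℕ} (h : IsTopShallowMinor G Komega d) :
    IsShallowMinor G Komega (2 * d) := by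
  classical
  obtain ⟨f, P, hinj, hpath, hlen, hsymm, hdisj⟩ := h
  -- trim the last edge off each path (for `u < v`)
  have key : ∀ u v : ℕ, ∀ (hlt : u < v), ∃ (x : V) (t : G.Walk (f u) x),
      G.Adj x (f v) ∧ t.toSubgraph ≤ (P (komega_adj hlt.ne)).toSubgraph ∧
      (f v ∉ t.support) ∧ t.length + 1 = (P (komega_adj hlt.ne)).length := by
    intro u v hlt
    set p := P (komega_adj hlt.ne) with hp
    have hne : f v ≠ f u := fun e => (hlt.ne (hinj e).symm)
    obtain ⟨x, t, hadj, heq⟩ := exists_trim p hne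
    refine ⟨x, t, hadj, ?_, ?_, ?_⟩
    · rw [heq, Walk.toSubgraph_append]; exact le_sup_left
    · have hnodup := (hpath (komega_adj hlt.ne)).support_nodup
      rw [← hp, heq, Walk.support_append] at hnodup
      have : (Walk.cons hadj Walk.nil).support.tail = [f v] := rfl
      rw [this] at hnodup
      intro hmem
      exact (List.disjoint_of_nodup_append hnodup) hmem (by simp)
    · rw [heq]; simp [Walk.length_append]
  choose xx tt hadj hle hnotin hlength using key
  -- branch sets
  let β : ℕ → G.Subgraph := fun u => ⨆ (v : ℕ) (hlt : u < v), (tt u v hlt).toSubgraph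
  have hmem : ∀ u (y : V), y ∈ (β u).verts ↔ ∃ v hlt, y ∈ (tt u v hlt).support := by
    intro u y
    simp only [β, Subgraph.verts_iSup, Set.mem_iUnion, Walk.mem_verts_toSubgraph]
  have hfu : ∀ u, f u ∈ (β u).verts := fun u =>
    (hmem u (f u)).2 ⟨u + 1, Nat.lt_succ_self u, Walk.start_mem_support _⟩
  have hsupp_sub : ∀ u v (hlt : u < v) (y : V), y ∈ (tt u v hlt).support →
      y ∈ (P (komega_adj hlt.ne)).support := by
    intro u v hlt y hy
    have := (hle u v hlt).1
    have hy' : y ∈ (tt u v hlt).toSubgraph.verts := by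
      rw [Walk.mem_verts_toSubgraph]; exact hy
    have := this hy'
    rwa [Walk.mem_verts_toSubgraph] at this
  refine ⟨β, ?_, ?_, ?_⟩
  · -- radius
    intro u
    refine ⟨⟨f u, hfu u⟩, ?_⟩
    rintro ⟨y, hy⟩
    obtain ⟨v, hlt, hy'⟩ := (hmem u y).1 hy
    have htake : ((tt u v hlt).takeUntil y hy').toSubgraph ≤ β u := by
      have h1 : ((tt u v hlt).takeUntil y hy').toSubgraph ≤ (tt u v hlt).toSubgraph := by
        conv_rhs => rw [← (tt u v hlt).take_spec hy']
        rw [Walk.toSubgraph_append]; exact le_sup_left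
      refine h1.trans ?_
      exact le_iSup₂ (f := fun v hlt => (tt u v hlt).toSubgraph) v hlt
    obtain ⟨q, hq⟩ := exists_walk_in_coe (β u) ((tt u v hlt).takeUntil y hy') htake (hfu u) hy
    refine ⟨q, ?_⟩
    calc q.length ≤ ((tt u v hlt).takeUntil y hy').length := hq
      _ ≤ (tt u v hlt).length := Walk.length_takeUntil_le _ _
      _ ≤ 2 * d := by
        have h1 := hlength u v hlt
        have h2 := hlen (komega_adj hlt.ne)
        omega
  · -- disjointness
    intro u u' huu'
    rw [Set.disjoint_left]
    intro y hy hy'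
    obtain ⟨v, hlt, h1⟩ := (hmem u y).1 hy
    obtain ⟨v', hlt', h2⟩ := (hmem u' y).1 hy'
    have hss : s(u, v) ≠ s(u', v') := by
      intro heq
      rw [Sym2.eq_iff] at heq
      rcases heq with ⟨rfl, rfl⟩ | ⟨rfl, rfl⟩
      · exact huu' rfl
      · exact absurd (hlt.trans hlt') (lt_irrefl _)
    obtain ⟨hc1, hc2⟩ := hdisj (komega_adj hlt.ne) (komega_adj hlt'.ne) hss y
      (hsupp_sub u v hlt y h1) (hsupp_sub u' v' hlt' y h2)
    have hy1 : y = f u := by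
      rcases hc1 with h | h
      · exact h
      · exact absurd (h ▸ h1) (hnotin u v hlt)
    have hy2 : y = f u' := by
      rcases hc2 with h | h
      · exact h
      · exact absurd (h ▸ h2) (hnotin u' v' hlt')
    exact huu' (hinj (hy1 ▸ hy2))
  · -- edges
    intro w w' hww'
    have hne : w ≠ w' := hww'.ne
    rcases hne.lt_or_gt with hlt | hlt
    · refine ⟨xx w w' hlt, ?_, f w', hfu w', hadj w w' hlt⟩
      exact (hmem w _).2 ⟨w', hlt, Walk.end_mem_support _⟩
    · refine ⟨f w, hfu w, xx w' w hlt, ?_, (hadj w' w hlt).symm⟩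
      exact (hmem w' _).2 ⟨w, hlt, Walk.end_mem_support _⟩


end EquivLemmas

section GreedySun

lemma greedy {X : Type} (S : ℕ → Set X) (hfin : ∀ t, (S t).Finite) (c : X)
    (T : Set ℕ) (hT : T.Infinite)
    (h : ∀ v : X, v ≠ c → {t | t ∈ T ∧ v ∈ S t}.Finite) :
    ∃ J, J ⊆ T ∧ J.Infinite ∧
      ∀ t ∈ J, ∀ t' ∈ J, t ≠ t' → ∀ y, y ∈ S t → y ∈ S t' → y = c := by
  classical
  set Bad : ℕ → Set ℕ := fun t => {t' | t' ∈ T ∧ ∃ v, v ≠ c ∧ v ∈ S t ∧ v ∈ S t'} with hBadDef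
  have hBadfin : ∀ t, (Bad t).Finite := by
    intro t
    have hsub : Bad t ⊆ ⋃ v ∈ (S t \ {c}), {t' | t' ∈ T ∧ v ∈ S t'} := by
      rintro t' ⟨ht', v, hv, hvt, hvt'⟩
      exact Set.mem_biUnion ⟨hvt, hv⟩ ⟨ht', hvt'⟩
    exact (Set.Finite.biUnion ((hfin t).diff) fun v hv => h v hv.2).subset hsub
  let chain : ℕ → Set ℕ := fun n =>
    Nat.rec T (fun _ A => A \ insert (sInf A) (Bad (sInf A))) n
  have hchain_succ : ∀ n, chain (n + 1) =
      chain n \ insert (sInf (chain n)) (Bad (sInf (chain n))) := fun n => rfl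
  have hinf : ∀ n, (chain n).Infinite := by
    intro n
    induction n with
    | zero => exact hT
    | succ n ih => exact ih.diff ((hBadfin _).insert _)
  have hsub : ∀ n, chain n ⊆ T := by
    intro n
    induction n with
    | zero => exact subset_rfl
    | succ n ih => exact Set.diff_subset.trans ih
  set seq : ℕ → ℕ := fun n => sInf (chain n) with hseqdef
  have hseqmem : ∀ n, seq n ∈ chain n := fun n => Nat.sInf_mem (hinf n).nonempty
  have hstep : ∀ n, chain (n + 1) ⊆ chain n := fun n => Set.diff_subset
  have hmono : ∀ {n m : ℕ}, n ≤ m → chain m ⊆ chain n := by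
    intro n m h
    induction h with
    | refl => exact subset_rfl
    | step _ ih => exact (hstep _).trans ih
  have hkey : ∀ n m, n < m → seq m ≠ seq n ∧ seq m ∉ Bad (seq n) := by
    intro n m h
    have hm : seq m ∈ chain (n + 1) := hmono (Nat.succ_le_of_lt h) (hseqmem m)
    rw [hchain_succ] at hm
    have := hm.2
    simp only [Set.mem_insert_iff, not_or] at this
    exact this
  refine ⟨Set.range seq, ?_, ?_, ?_⟩
  · rintro _ ⟨n, rfl⟩; exact hsub n (hseqmem n)
  · apply Set.infinite_range_of_injective
    intro n m hnm
    by_contra hne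
    rcases Nat.lt_or_ge n m with h | h
    · exact (hkey n m h).1 hnm.symm
    · exact (hkey m n (lt_of_le_of_ne h (Ne.symm hne))).1 hnm
  · rintro _ ⟨n, rfl⟩ _ ⟨m, rfl⟩ hne y hy hy'
    by_contra hyc
    have hnm : n ≠ m := fun e => hne (by rw [e])
    rcases hnm.lt_or_gt with h | h
    · exact (hkey n m h).2 ⟨hsub m (hseqmem m), y, hyc, hy, hy'⟩
    · exact (hkey m n h).2 ⟨hsub n (hseqmem n), y, hyc, hy', hy⟩

lemma sun {X : Type} (Gx : SimpleGraph X) :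
    ∀ (d : ℕ) (x : ℕ → X) (c : X) (T : Set ℕ), T.Infinite →
      (∀ t ∈ T, ∃ p : Gx.Walk c (x t), p.length ≤ d) →
      ∃ (z : X) (J : Set ℕ), J ⊆ T ∧ J.Infinite ∧
        ∃ q : ∀ t ∈ J, Gx.Walk z (x t),
          (∀ t (ht : t ∈ J), (q t ht).length ≤ d) ∧
          (∀ t (ht : t ∈ J) t' (ht' : t' ∈ J), t ≠ t' →
            ∀ y, y ∈ (q t ht).support → y ∈ (q t' ht').support → y = z) := by
  intro d
  induction d with
  | zero =>
    intro x c T hT hw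
    choose p hp using hw
    refine ⟨c, T, subset_rfl, hT, fun t ht => p t ht, fun t ht => hp t ht, ?_⟩
    intro t ht t' ht' htt y hy hy'
    have h0 : (p t ht).length = 0 := Nat.le_zero.1 (hp t ht)
    have hnil : (p t ht).Nil := Walk.nil_iff_length_eq.2 h0
    rw [Walk.nil_iff_support_eq.1 hnil] at hy
    simpa using hy
  | succ d ih =>
    classical
    intro x c T hT hw
    choose p hp using hw
    by_cases hA : ∃ v, v ≠ c ∧ {t | ∃ ht : t ∈ T, v ∈ (p t ht).support}.Infinite
    · obtain ⟨v, hvc, hTinf⟩ := hA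
      set T' : Set ℕ := {t | ∃ ht : t ∈ T, v ∈ (p t ht).support} with hT'def
      have hT'sub : T' ⊆ T := fun t ht => ht.1
      have hw' : ∀ t ∈ T', ∃ q : Gx.Walk v (x t), q.length ≤ d := by
        rintro t ⟨ht, hv⟩
        refine ⟨(p t ht).dropUntil v hv, ?_⟩
        have hspec := congr_arg Walk.length ((p t ht).take_spec hv)
        rw [Walk.length_append] at hspec
        have htk : 1 ≤ ((p t ht).takeUntil v hv).length := by
          by_contra hc0
          push_neg at hc0
          have h0 : ((p t ht).takeUntil v hv).length = 0 := by omega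
          exact hvc (Walk.eq_of_length_eq_zero h0).symm
        have := hp t ht
        omega
      obtain ⟨z, J, hJsub, hJinf, q, hq1, hq2⟩ := ih x v T' hTinf hw'
      exact ⟨z, J, hJsub.trans hT'sub, hJinf, q, fun t ht => (hq1 t ht).trans (Nat.le_succ d),
        hq2⟩
    · push_neg at hA
      have hA' : ∀ v : X, v ≠ c → {t | ∃ ht : t ∈ T, v ∈ (p t ht).support}.Finite := by
        intro v hv
        have := hA v hv
        exact this
      classical
      set S : ℕ → Set X := fun t =>
        if ht : t ∈ T then {y | y ∈ (p t ht).support} else ∅ with hSdef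
      have hSfin : ∀ t, (S t).Finite := by
        intro t
        by_cases ht : t ∈ T
        · rw [hSdef]; simp only [dif_pos ht]; exact (p t ht).support.finite_toSet
        · rw [hSdef]; simp only [dif_neg ht]; exact Set.finite_empty
      have hfib : ∀ v : X, v ≠ c → {t | t ∈ T ∧ v ∈ S t}.Finite := by
        intro v hv
        refine (hA' v hv).subset ?_
        rintro t ⟨ht, hvS⟩
        rw [hSdef] at hvS
        simp only [dif_pos ht] at hvS
        exact ⟨ht, hvS⟩
      obtain ⟨J, hJsub, hJinf, hJ⟩ := greedy S hSfin c T hT hfib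
      refine ⟨c, J, hJsub, hJinf, fun t ht => p t (hJsub ht),
        fun t ht => hp t (hJsub ht), ?_⟩
      intro t ht t' ht' htt y hy hy'
      refine hJ t ht t' ht' htt y ?_ ?_
      · rw [hSdef]; simp only [dif_pos (hJsub ht)]; exact hy
      · rw [hSdef]; simp only [dif_pos (hJsub ht')]; exact hy'


end GreedySun

section HardDirection

variable {V : Type} {G : SimpleGraph V}

lemma minor_to_top {d : ℕ} (h : IsShallowMinor G Komega d) :
    IsTopShallowMinor G Komega (2 * d + 1) := by
  classical
  obtain ⟨α, hrad, hdisj, hedge⟩ := h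
  choose ctr hctr using hrad
  have hedge' : ∀ a b : ℕ, ∃ (x : (α a).verts) (y : (α b).verts), a ≠ b → G.Adj x y := by
    intro a b
    by_cases hab : a = b
    · exact ⟨ctr a, ctr b, fun h' => absurd hab h'⟩
    · obtain ⟨x, hx, y, hy, hxy⟩ := hedge a b (komega_adj hab)
      exact ⟨⟨x, hx⟩, ⟨y, hy⟩, fun _ => hxy⟩
  choose Xs Ys hXY using hedge'
  have hXY' : ∀ a b, a ≠ b → G.Adj ((α a).hom (Xs a b)) ((α b).hom (Ys a b)) := hXY
  have hblock : ∀ {a b : ℕ} {x : V}, x ∈ (α a).verts → x ∈ (α b).verts → a = b := by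
    intro a b x hxa hxb
    by_contra hab
    exact Set.disjoint_left.1 (hdisj a b hab) hxa hxb
  -- one step of the hub construction
  have step : ∀ A : Set ℕ, A.Infinite →
      ∃ (i : ℕ) (z : (α i).verts) (J A' : Set ℕ)
        (q : ∀ t ∈ J, (α i).coe.Walk z (Xs i t)),
        i ∈ A ∧ J ⊆ A ∧ i ∉ J ∧ A' ⊆ J ∧ A'.Infinite ∧ (J \ A').Infinite ∧
        (∀ t (ht : t ∈ J), (q t ht).length ≤ d) ∧
        (∀ t (ht : t ∈ J) t' (ht' : t' ∈ J), t ≠ t' →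
          ∀ y, y ∈ (q t ht).support → y ∈ (q t' ht').support → y = z) := by
    intro A hA
    set i := sInf A with hidef
    have hiA : i ∈ A := Nat.sInf_mem hA.nonempty
    have hTinf : (A \ {i}).Infinite := hA.diff (Set.finite_singleton i)
    obtain ⟨z, J, hJsub, hJinf, q, hq1, hq2⟩ :=
      sun ((α i).coe) d (fun t => Xs i t) (ctr i) (A \ {i}) hTinf
        (fun t _ => hctr i (Xs i t))
    let e : ℕ ↪ ↥J := hJinf.natEmbedding
    have heinj : ∀ {n m : ℕ}, ((e n : ℕ) = (e m : ℕ)) → n = m := by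
      intro n m hnm
      exact e.injective (Subtype.coe_injective hnm)
    refine ⟨i, z, J, Set.range (fun n => (e (2 * n + 1) : ℕ)), q, hiA,
      hJsub.trans Set.diff_subset, fun hmem => (hJsub hmem).2 rfl, ?_, ?_, ?_, hq1, hq2⟩
    · rintro _ ⟨n, rfl⟩; exact (e (2 * n + 1)).2
    · apply Set.infinite_range_of_injective
      intro n m hnm
      have := heinj hnm
      omega
    · have hsub : Set.range (fun n => (e (2 * n) : ℕ)) ⊆
          J \ Set.range (fun n => (e (2 * n + 1) : ℕ)) := by
        rintro _ ⟨n, rfl⟩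
        refine ⟨(e (2 * n)).2, ?_⟩
        rintro ⟨k, hk⟩
        have := heinj hk
        omega
      refine Set.Infinite.mono hsub ?_
      apply Set.infinite_range_of_injective
      intro n m hnm
      have := heinj hnm
      omega
  choose Fi Fz FJ FA' Fq hspec using step
  -- the chain of pools
  let chain : ℕ → {A : Set ℕ // A.Infinite} := fun n =>
    Nat.rec ⟨Set.univ, Set.infinite_univ⟩
      (fun _ s => ⟨FA' s.1 s.2, (hspec s.1 s.2).2.2.2.2.1⟩) n
  let A_ : ℕ → Set ℕ := fun k => (chain k).1
  let ii : ℕ → ℕ := fun k => Fi (A_ k) (chain k).2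
  let zz : ∀ k, (α (ii k)).verts := fun k => Fz (A_ k) (chain k).2
  let JJ : ℕ → Set ℕ := fun k => FJ (A_ k) (chain k).2
  let qq : ∀ k, ∀ t ∈ JJ k, (α (ii k)).coe.Walk (zz k) (Xs (ii k) t) :=
    fun k => Fq (A_ k) (chain k).2
  let PP : ℕ → Set ℕ := fun k => JJ k \ A_ (k + 1)
  have hchain : ∀ k, A_ (k + 1) = FA' (A_ k) (chain k).2 := fun k => rfl
  have spec : ∀ k, ii k ∈ A_ k ∧ JJ k ⊆ A_ k ∧ ii k ∉ JJ k ∧ A_ (k+1) ⊆ JJ k ∧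
      (A_ (k+1)).Infinite ∧ (PP k).Infinite ∧
      (∀ t (ht : t ∈ JJ k), (qq k t ht).length ≤ d) ∧
      (∀ t (ht : t ∈ JJ k) t' (ht' : t' ∈ JJ k), t ≠ t' →
        ∀ y, y ∈ (qq k t ht).support → y ∈ (qq k t' ht').support → y = zz k) :=
    fun k => hspec (A_ k) (chain k).2
  have hmono : ∀ {k l : ℕ}, k ≤ l → A_ l ⊆ A_ k := by
    intro k l h
    induction h with
    | refl => exact subset_rfl
    | step _ ih => exact (((spec _).2.2.2.1).trans ((spec _).2.1)).trans ih
  have hPJ : ∀ l k, l ≤ k → PP k ⊆ JJ l := by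
    intro l k hlk
    rcases Nat.eq_or_lt_of_le hlk with rfl | hlt
    · exact Set.diff_subset
    · intro t ht
      exact (spec l).2.2.2.1 (hmono hlt (Set.diff_subset.trans (spec k).2.1 ht))
  have hiinj : Function.Injective ii := by
    intro k l hkl
    by_contra hne
    rcases Ne.lt_or_gt hne with h | h
    · exact (spec k).2.2.1 (hkl ▸ ((spec k).2.2.2.1 (hmono h ((spec l).1))))
    · exact (spec l).2.2.1 (hkl ▸ ((spec l).2.2.2.1 (hmono h ((spec k).1))))
  have hPi : ∀ k l, ii l ∉ PP k := by
    intro k l hmem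
    rcases Nat.lt_or_ge k l with h | h
    · exact hmem.2 (hmono h ((spec l).1))
    · exact (spec l).2.2.1 (hPJ l k h hmem)
  have hPdisjoint : ∀ k l, k < l → ∀ t, t ∈ PP k → t ∈ PP l → False := by
    intro k l h t htk htl
    exact htk.2 (hmono h (Set.diff_subset.trans (spec l).2.1 htl))
  have hPinf : ∀ k, (PP k).Infinite := fun k => (spec k).2.2.2.2.2.1
  have hqlen := fun k => (spec k).2.2.2.2.2.2.1
  have hqdisj := fun k => (spec k).2.2.2.2.2.2.2
  clear hchain
  -- private blocks
  let em : ∀ k, ℕ ↪ ↥(PP k) := fun k => (hPinf k).natEmbedding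
  let mm : ℕ → ℕ → ℕ := fun u v => ((em v) u : ℕ)
  have hmP : ∀ u v, mm u v ∈ PP v := fun u v => ((em v) u).2
  have hmJ : ∀ u v l, l ≤ v → mm u v ∈ JJ l := fun u v l hl => hPJ l v hl (hmP u v)
  have hmne : ∀ {u v u' v' : ℕ}, ¬(u = u' ∧ v = v') → mm u v ≠ mm u' v' := by
    intro u v u' v' hne heq
    by_cases hvv : v = v'
    · subst hvv
      exact hne ⟨(em v).injective (Subtype.coe_injective heq), rfl⟩
    · rcases Ne.lt_or_gt hvv with h | h
      · exact hPdisjoint v v' h _ (hmP u v) (heq ▸ hmP u' v')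
      · exact hPdisjoint v' v h _ (hmP u' v') (heq ▸ hmP u v)
  have hmi : ∀ u v l, mm u v ≠ ii l := fun u v l heq => hPi v l (heq ▸ hmP u v)
  -- branch vertices
  let f : ℕ → V := fun k => ((zz k : (α (ii k)).verts) : V)
  have hfinj : Function.Injective f := by
    intro k l hkl
    apply hiinj
    apply hblock (zz k).2
    show ((zz k : (α (ii k)).verts) : V) ∈ (α (ii l)).verts
    rw [show (((zz k : (α (ii k)).verts)) : V) = ((zz l : (α (ii l)).verts) : V) from hkl]
    exact (zz l).2
  choose rwalk hrlen using hctr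
  have hfhom : ∀ k, (α (ii k)).hom (zz k) = f k := fun _ => rfl
  -- the connecting walks
  have key : ∃ W : ∀ u v : ℕ, u < v → G.Walk (f u) (f v),
      (∀ u v (hlt : u < v), (W u v hlt).length ≤ 4 * d + 2) ∧
      (∀ u v (hlt : u < v), ∀ x ∈ (W u v hlt).support,
        (∃ s ∈ (qq u (mm u v) (hmJ u v u hlt.le)).support, (s : V) = x) ∨
        x ∈ (α (mm u v)).verts ∨
        (∃ s ∈ (qq v (mm u v) (hmJ u v v le_rfl)).support, (s : V) = x)) := by
    refine ⟨fun u v hlt => Walk.copy (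
      ((qq u (mm u v) (hmJ u v u hlt.le)).map (α (ii u)).hom).append
        (Walk.cons (hXY' (ii u) (mm u v) (hmi u v u).symm)
          ((((rwalk (mm u v) (Ys (ii u) (mm u v))).reverse.append
              (rwalk (mm u v) (Ys (ii v) (mm u v)))).map (α (mm u v)).hom).append
            (Walk.cons ((hXY' (ii v) (mm u v) (hmi u v v).symm).symm)
              ((qq v (mm u v) (hmJ u v v le_rfl)).map (α (ii v)).hom).reverse)))) (hfhom u) (hfhom v), ?_, ?_⟩
    · intro u v hlt
      simp only [Walk.length_copy, Walk.length_append, Walk.length_cons, Walk.length_map,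
        Walk.length_reverse]
      have h1 := hqlen u (mm u v) (hmJ u v u hlt.le)
      have h2 := hqlen v (mm u v) (hmJ u v v le_rfl)
      have h3 := hrlen (mm u v) (Ys (ii u) (mm u v))
      have h4 := hrlen (mm u v) (Ys (ii v) (mm u v))
      omega
    · intro u v hlt x hx
      beta_reduce at hx
      rw [Walk.support_copy, Walk.mem_support_append_iff] at hx
      rcases hx with hx | hx
      · rw [Walk.support_map, List.mem_map] at hx
        obtain ⟨s, hs, rfl⟩ := hx
        exact Or.inl ⟨s, hs, rfl⟩
      · rw [Walk.support_cons, List.mem_cons] at hx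
        rcases hx with rfl | hx
        · exact Or.inl ⟨Xs (ii u) (mm u v), Walk.end_mem_support _, rfl⟩
        · rw [Walk.mem_support_append_iff] at hx
          rcases hx with hx | hx
          · rw [Walk.support_map, List.mem_map] at hx
            obtain ⟨s, hs, rfl⟩ := hx
            exact Or.inr (Or.inl s.2)
          · rw [Walk.support_cons, List.mem_cons] at hx
            rcases hx with rfl | hx
            · exact Or.inr (Or.inl (Ys (ii v) (mm u v)).2)
            · rw [Walk.support_reverse, List.mem_reverse, Walk.support_map,
                List.mem_map] at hx
              obtain ⟨s, hs, rfl⟩ := hx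
              exact Or.inr (Or.inr ⟨s, hs, rfl⟩)
  obtain ⟨W, hWlen, hWsupp⟩ := key
  -- the two-sided disjointness core
  have hcore : ∀ a b a' b' (hab : a < b) (ha'b' : a' < b'), ¬(a = a' ∧ b = b') →
      ∀ x, x ∈ (W a b hab).support → x ∈ (W a' b' ha'b').support →
      ∃ w, (w = a ∨ w = b) ∧ (w = a' ∨ w = b') ∧ x = f w := by
    intro a b a' b' hab ha'b' hne x hx hx'
    have hμ : mm a b ≠ mm a' b' := hmne hne
    have tailtail : ∀ (w w' μ μ' : ℕ) (hJ : μ ∈ JJ w) (hJ' : μ' ∈ JJ w'),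
        μ ≠ μ' → ∀ (s : (α (ii w)).verts) (s' : (α (ii w')).verts),
        s ∈ (qq w μ hJ).support → s' ∈ (qq w' μ' hJ').support →
        (s : V) = (s' : V) → (s : V) = f w ∧ w = w' := by
      intro w w' μ μ' hJ hJ' hμμ s s' hs hs' heq
      have hww : w = w' := hiinj (hblock s.2 (heq ▸ s'.2))
      subst hww
      have hss : s = s' := Subtype.coe_injective heq
      subst hss
      have := hqdisj w μ hJ μ' hJ' hμμ s hs hs'
      exact ⟨congrArg _ this, rfl⟩
    rcases hWsupp a b hab x hx with ⟨s, hs, rfl⟩ | hmid | ⟨s, hs, rfl⟩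
    · rcases hWsupp a' b' ha'b' _ hx' with ⟨s', hs', heq⟩ | hmid' | ⟨s', hs', heq⟩
      · obtain ⟨h1, h2⟩ := tailtail a a' _ _ _ _ hμ s s' hs hs' heq.symm
        exact ⟨a, Or.inl rfl, Or.inl h2, h1⟩
      · exact absurd (hblock hmid' s.2) (hmi a' b' a)
      · obtain ⟨h1, h2⟩ := tailtail a b' _ _ _ _ hμ s s' hs hs' heq.symm
        exact ⟨a, Or.inl rfl, Or.inr h2, h1⟩
    · rcases hWsupp a' b' ha'b' _ hx' with ⟨s', hs', heq⟩ | hmid' | ⟨s', hs', heq⟩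
      · exact absurd (hblock hmid (heq ▸ s'.2)) (hmi a b a')
      · exact absurd (hblock hmid hmid') hμ
      · exact absurd (hblock hmid (heq ▸ s'.2)) (hmi a b b')
    · rcases hWsupp a' b' ha'b' _ hx' with ⟨s', hs', heq⟩ | hmid' | ⟨s', hs', heq⟩
      · obtain ⟨h1, h2⟩ := tailtail b a' _ _ _ _ hμ s s' hs hs' heq.symm
        exact ⟨b, Or.inr rfl, Or.inl h2, h1⟩
      · exact absurd (hblock hmid' s.2) (hmi a' b' b)
      · obtain ⟨h1, h2⟩ := tailtail b b' _ _ _ _ hμ s s' hs hs' heq.symm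
        exact ⟨b, Or.inr rfl, Or.inr h2, h1⟩
  refine ⟨f, fun u v h => if hlt : u < v then (W u v hlt).bypass
    else ((W v u ((h.ne.lt_or_gt).resolve_left hlt)).bypass).reverse, hfinj, ?_, ?_, ?_, ?_⟩
  · intro u v h
    by_cases hlt : u < v
    · simp only [dif_pos hlt]
      exact Walk.bypass_isPath _
    · simp only [dif_neg hlt]
      exact (Walk.bypass_isPath _).reverse
  · intro u v h
    by_cases hlt : u < v
    · simp only [dif_pos hlt]
      have h1 := Walk.length_bypass_le (W u v hlt)
      have h2 := hWlen u v hlt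
      omega
    · simp only [dif_neg hlt, Walk.length_reverse]
      have h1 := Walk.length_bypass_le (W v u ((h.ne.lt_or_gt).resolve_left hlt))
      have h2 := hWlen v u ((h.ne.lt_or_gt).resolve_left hlt)
      omega
  · intro u v h
    by_cases hlt : u < v
    · have hnlt : ¬ v < u := Nat.lt_asymm hlt
      simp only [dif_pos hlt, dif_neg hnlt]
    · have hlt' : v < u := (h.ne.lt_or_gt).resolve_left hlt
      simp only [dif_pos hlt', dif_neg hlt, Walk.reverse_reverse]
  · intro u v u' v' h h' hss x hx hx'
    have hgen : ∀ (a b : ℕ) (hab : a < b), s(u, v) = s(a, b) →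
        ∀ (a' b' : ℕ) (ha'b' : a' < b'), s(u', v') = s(a', b') →
        x ∈ (W a b hab).support → x ∈ (W a' b' ha'b').support →
        (x = f u ∨ x = f v) ∧ (x = f u' ∨ x = f v') := by
      intro a b hab hp a' b' ha'b' hp' h1 h2
      have hnab : ¬(a = a' ∧ b = b') := by
        rintro ⟨rfl, rfl⟩
        exact hss (hp.trans hp'.symm)
      obtain ⟨w, hw1, hw2, hxw⟩ := hcore a b a' b' hab ha'b' hnab x h1 h2
      constructor
      · have hwuv : w = u ∨ w = v := by
          rw [Sym2.eq_iff] at hp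
          rcases hp with ⟨rfl, rfl⟩ | ⟨rfl, rfl⟩
          · exact hw1
          · exact hw1.symm
        rcases hwuv with rfl | rfl
        · exact Or.inl hxw
        · exact Or.inr hxw
      · have hwuv : w = u' ∨ w = v' := by
          rw [Sym2.eq_iff] at hp'
          rcases hp' with ⟨rfl, rfl⟩ | ⟨rfl, rfl⟩
          · exact hw2
          · exact hw2.symm
        rcases hwuv with rfl | rfl
        · exact Or.inl hxw
        · exact Or.inr hxw
    by_cases hlt : u < v
    · simp only [dif_pos hlt] at hx
      have hxW := Walk.support_bypass_subset _ hx
      by_cases hlt' : u' < v'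
      · simp only [dif_pos hlt'] at hx'
        exact hgen u v hlt rfl u' v' hlt' rfl hxW (Walk.support_bypass_subset _ hx')
      · simp only [dif_neg hlt'] at hx'
        rw [Walk.support_reverse, List.mem_reverse] at hx'
        exact hgen u v hlt rfl v' u' ((h'.ne.lt_or_gt).resolve_left hlt') Sym2.eq_swap
          hxW (Walk.support_bypass_subset _ hx')
    · simp only [dif_neg hlt] at hx
      rw [Walk.support_reverse, List.mem_reverse] at hx
      have hxW := Walk.support_bypass_subset _ hx
      by_cases hlt' : u' < v'
      · simp only [dif_pos hlt'] at hx'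
        exact hgen v u ((h.ne.lt_or_gt).resolve_left hlt) Sym2.eq_swap u' v' hlt' rfl
          hxW (Walk.support_bypass_subset _ hx')
      · simp only [dif_neg hlt'] at hx'
        rw [Walk.support_reverse, List.mem_reverse] at hx'
        exact hgen v u ((h.ne.lt_or_gt).resolve_left hlt) Sym2.eq_swap v' u'
          ((h'.ne.lt_or_gt).resolve_left hlt') Sym2.eq_swap hxW
          (Walk.support_bypass_subset _ hx')


end HardDirection

/-- `K_ω ∈ C* ▽ ω` iff `K_ω ∈ C* ∇̃ ω`: `C` is limit somewhere dense iff
`C` is limit topologically somewhere dense. -/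
theorem limit_dense_top_equiv (U : Ultrafilter ℕ) (hU : ∀ a : ℕ, {a} ∉ U)
    (C : GraphClass) (hfin : FiniteClass C) :
    (∃ d : ℕ, InLimitMinor U C d Komega) ↔ (∃ d : ℕ, InLimitTopMinor U C d Komega) := by
  constructor
  · rintro ⟨d, V, G, hlim, hmin⟩
    exact ⟨2 * d + 1, V, G, hlim, minor_to_top hmin⟩
  · rintro ⟨d, V, G, hlim, htop⟩
    exact ⟨2 * d, V, G, hlim, top_to_minor htop⟩

end NWD
end
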